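/- arXiv:0906.1091 — 3 statements merged into one kernel-verified Lean document; each statement's English description precedes it below -/
import Mathlib

section
/- Let c < d and b ∈ L∞(c,d) with ‖b‖_{L∞(c,d)} ≤ π²/(4(d-c)²) and b not a.e. equal to π²/(4(d-c)²) on (c,d). Then the only solution of u'' + bu = 0 on (c,d) with u'(c) = 0, u(d) = 0 is the trivial one, and likewise for the boundary conditions u(c) = 0, u'(d) = 0. -/
open MeasureTheory Real Set intervalIntegral Topology


lemma gron_fwd {a b K C : ℝ} (hab : a ≤ b) (hK : 0 ≤ K) {φ : ℝ → ℝ}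
    (hφ : ContinuousOn φ (Icc a b))
    (h : ∀ t ∈ Icc a b, φ t ≤ C + K * ∫ s in a..t, φ s) :
    ∀ t ∈ Icc a b, φ t ≤ C * Real.exp (K * (t - a)) := by
  intro t ht
  have hint : ∀ x ∈ Icc a b, IntervalIntegrable φ volume a x := by
    intro x hx
    exact (hφ.mono (Icc_subset_Icc le_rfl hx.2)).intervalIntegrable_of_Icc hx.1
  set ψ : ℝ → ℝ := fun x => C + K * ∫ s in a..x, φ s with hψ
  set g : ℝ → ℝ := fun x => ψ x * Real.exp (-K * x) with hg
  have hψd : ∀ x ∈ Ioo a b, HasDerivAt ψ (K * φ x) x := by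
    intro x hx
    have hcont : ContinuousAt φ x :=
      hφ.continuousAt (Icc_mem_nhds hx.1 hx.2)
    have hmeas : StronglyMeasurableAtFilter φ (𝓝 x) volume :=
      (hφ.mono Ioo_subset_Icc_self).stronglyMeasurableAtFilter isOpen_Ioo x hx
    have := intervalIntegral.integral_hasDerivAt_right (hint x (Ioo_subset_Icc_self hx))
      hmeas hcont
    exact ((this.const_mul K).const_add C)
  have hgd : ∀ x ∈ Ioo a b, HasDerivAt g ((K * φ x - K * ψ x) * Real.exp (-K * x)) x := by
    intro x hx
    have he : HasDerivAt (fun x => Real.exp (-K * x)) (-K * Real.exp (-K * x)) x := by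
      simpa [mul_comm] using ((hasDerivAt_id x).const_mul (-K)).exp
    have := (hψd x hx).mul he
    refine this.congr_deriv ?_
    ring
  have hψc : ContinuousOn ψ (Icc a b) := by
    have : ContinuousOn (fun x => ∫ s in a..x, φ s) (Icc a b) := by
      have := intervalIntegral.continuousOn_primitive_interval (a := a) (b := b) (μ := volume)
        (f := φ) (by rw [uIcc_of_le hab]; exact hφ.integrableOn_compact isCompact_Icc)
      rwa [uIcc_of_le hab] at this
    exact continuousOn_const.add (continuousOn_const.mul this)
  have hgc : ContinuousOn g (Icc a b) :=
    hψc.mul ((Real.continuous_exp.comp (continuous_const.mul continuous_id)).continuousOn)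
  have hganti : AntitoneOn g (Icc a b) := by
    apply antitoneOn_of_deriv_nonpos (convex_Icc a b) hgc
    · intro x hx
      rw [interior_Icc] at hx
      exact (hgd x hx).differentiableAt.differentiableWithinAt
    · intro x hx
      rw [interior_Icc] at hx
      rw [(hgd x hx).deriv]
      have hφψ : φ x ≤ ψ x := h x (Ioo_subset_Icc_self hx)
      have : K * φ x - K * ψ x ≤ 0 := by nlinarith
      exact mul_nonpos_of_nonpos_of_nonneg this (Real.exp_pos _).le
  have hga : g t ≤ g a := hganti (left_mem_Icc.mpr hab) ht ht.1
  have hga' : g a = C * Real.exp (-K * a) := by simp [hg, hψ]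
  have hψt : ψ t ≤ C * Real.exp (K * (t - a)) := by
    have hepos : (0:ℝ) < Real.exp (-K * t) := Real.exp_pos _
    rw [hga'] at hga
    have : ψ t ≤ C * Real.exp (-K * a) / Real.exp (-K * t) := by
      rw [le_div_iff₀ hepos]; exact hga
    calc ψ t ≤ C * Real.exp (-K * a) / Real.exp (-K * t) := this
      _ = C * Real.exp (K * (t - a)) := by
          rw [div_eq_iff hepos.ne', mul_assoc, ← Real.exp_add]
          ring_nf
  exact (h t ht).trans hψt

lemma gron_bwd {a b K C : ℝ} (hab : a ≤ b) (hK : 0 ≤ K) {φ : ℝ → ℝ}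
    (hφ : ContinuousOn φ (Icc a b))
    (h : ∀ t ∈ Icc a b, φ t ≤ C + K * ∫ s in t..b, φ s) :
    ∀ t ∈ Icc a b, φ t ≤ C * Real.exp (K * (b - t)) := by
  intro t ht
  have hint : ∀ x ∈ Icc a b, IntervalIntegrable φ volume x b := by
    intro x hx
    exact (hφ.mono (Icc_subset_Icc hx.1 le_rfl)).intervalIntegrable_of_Icc hx.2
  set ψ : ℝ → ℝ := fun x => C + K * ∫ s in x..b, φ s with hψ
  set g : ℝ → ℝ := fun x => ψ x * Real.exp (K * x) with hg
  have hψd : ∀ x ∈ Ioo a b, HasDerivAt ψ (-(K * φ x)) x := by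
    intro x hx
    have hcont : ContinuousAt φ x := hφ.continuousAt (Icc_mem_nhds hx.1 hx.2)
    have hmeas : StronglyMeasurableAtFilter φ (𝓝 x) volume :=
      (hφ.mono Ioo_subset_Icc_self).stronglyMeasurableAtFilter isOpen_Ioo x hx
    have := intervalIntegral.integral_hasDerivAt_left (hint x (Ioo_subset_Icc_self hx))
      hmeas hcont
    have h2 := (this.const_mul K).const_add C
    rw [mul_neg] at h2
    exact h2
  have hgd : ∀ x ∈ Ioo a b, HasDerivAt g ((K * ψ x - K * φ x) * Real.exp (K * x)) x := by
    intro x hx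
    have he : HasDerivAt (fun x => Real.exp (K * x)) (K * Real.exp (K * x)) x := by
      simpa [mul_comm] using ((hasDerivAt_id x).const_mul K).exp
    have := (hψd x hx).mul he
    refine this.congr_deriv ?_
    ring
  have hψc : ContinuousOn ψ (Icc a b) := by
    have : ContinuousOn (fun x => ∫ s in x..b, φ s) (Icc a b) := by
      have := intervalIntegral.continuousOn_primitive_interval_left (a := a) (b := b) (μ := volume)
        (f := φ) (by rw [uIcc_of_le hab]; exact hφ.integrableOn_compact isCompact_Icc)
      rwa [uIcc_of_le hab] at this
    exact continuousOn_const.add (continuousOn_const.mul this)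
  have hgc : ContinuousOn g (Icc a b) :=
    hψc.mul ((Real.continuous_exp.comp (continuous_const.mul continuous_id)).continuousOn)
  have hgmono : MonotoneOn g (Icc a b) := by
    apply monotoneOn_of_deriv_nonneg (convex_Icc a b) hgc
    · intro x hx
      rw [interior_Icc] at hx
      exact (hgd x hx).differentiableAt.differentiableWithinAt
    · intro x hx
      rw [interior_Icc] at hx
      rw [(hgd x hx).deriv]
      have hφψ : φ x ≤ ψ x := h x (Ioo_subset_Icc_self hx)
      have : 0 ≤ K * ψ x - K * φ x := by nlinarith
      exact mul_nonneg this (Real.exp_pos _).le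
  have hgb : g t ≤ g b := hgmono ht (right_mem_Icc.mpr hab) ht.2
  have hgb' : g b = C * Real.exp (K * b) := by simp [hg, hψ]
  have hψt : ψ t ≤ C * Real.exp (K * (b - t)) := by
    have hepos : (0:ℝ) < Real.exp (K * t) := Real.exp_pos _
    rw [hgb'] at hgb
    have : ψ t ≤ C * Real.exp (K * b) / Real.exp (K * t) := by
      rw [le_div_iff₀ hepos]; exact hgb
    calc ψ t ≤ C * Real.exp (K * b) / Real.exp (K * t) := this
      _ = C * Real.exp (K * (b - t)) := by
          rw [div_eq_iff hepos.ne', mul_assoc, ← Real.exp_add]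
          ring_nf
  exact (h t ht).trans hψt

lemma ibp {f g g' : ℝ → ℝ} {a x : ℝ} (hax : a ≤ x)
    (hf : IntervalIntegrable f volume a x)
    (hg : ∀ s, HasDerivAt g (g' s) s) (hg' : Continuous g') :
    ∫ s in a..x, (∫ t in a..s, f t) * g' s
      = (∫ t in a..x, f t) * g x - ∫ t in a..x, f t * g t := by
  have hfI : IntegrableOn f (Ioc a x) volume := hf.1
  have hg'I : IntegrableOn g' (Ioc a x) volume :=
    (hg'.continuousOn).integrableOn_compact isCompact_Icc |>.mono_set Ioc_subset_Icc_self
  set E : Set (ℝ × ℝ) := {p | a < p.2 ∧ p.2 ≤ p.1} with hE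
  have hEm : MeasurableSet E :=
    (measurableSet_lt measurable_const measurable_snd).inter
      (measurableSet_le measurable_snd measurable_fst)
  set h : ℝ × ℝ → ℝ := fun p => f p.2 * g' p.1 with hh
  have hhint : Integrable h ((volume.restrict (Ioc a x)).prod (volume.restrict (Ioc a x))) := by
    have := hg'I.mul_prod hfI
    simpa [hh, mul_comm] using this
  have hind : Integrable (E.indicator h)
      ((volume.restrict (Ioc a x)).prod (volume.restrict (Ioc a x))) :=
    hhint.indicator hEm
  -- step 1: write LHS as double integral of indicator
  have step1 : ∫ s in a..x, (∫ t in a..s, f t) * g' s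
      = ∫ s in Ioc a x, ∫ t in Ioc a x, E.indicator h (s, t) := by
    rw [intervalIntegral.integral_of_le hax]
    apply setIntegral_congr_fun measurableSet_Ioc
    intro s hs
    have has : a ≤ s := hs.1.le
    have hinner : ∀ t, E.indicator h (s, t) = (Ioc a s).indicator (fun t => f t * g' s) t := by
      intro t
      by_cases htm : t ∈ Ioc a s
      · rw [indicator_of_mem htm]
        rw [indicator_of_mem (by exact ⟨htm.1, htm.2⟩ : (s, t) ∈ E)]
      · rw [indicator_of_notMem htm, indicator_of_notMem]
        intro hmem
        exact htm ⟨hmem.1, hmem.2⟩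
    simp_rw [hinner]
    rw [setIntegral_indicator measurableSet_Ioc]
    have : Ioc a x ∩ Ioc a s = Ioc a s := by
      rw [Set.Ioc_inter_Ioc, sup_idem, inf_eq_right.mpr hs.2]
    rw [this, intervalIntegral.integral_of_le has, ← MeasureTheory.integral_mul_const]
  -- step 2: swap
  have step2 : ∫ s in Ioc a x, ∫ t in Ioc a x, E.indicator h (s, t)
      = ∫ t in Ioc a x, ∫ s in Ioc a x, E.indicator h (s, t) :=
    integral_integral_swap (by exact hind)
  -- step 3: inner integral computation
  have step3 : ∫ t in Ioc a x, (∫ s in Ioc a x, E.indicator h (s, t))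
      = ∫ t in Ioc a x, f t * (g x - g t) := by
    apply setIntegral_congr_fun measurableSet_Ioc
    intro t ht
    have hinner : ∀ s, E.indicator h (s, t) = (Ici t).indicator (fun s => f t * g' s) s := by
      intro s
      by_cases hsm : t ≤ s
      · rw [indicator_of_mem (by exact ⟨ht.1, hsm⟩ : (s,t) ∈ E),
          indicator_of_mem (by exact hsm : s ∈ Ici t)]
      · rw [indicator_of_notMem (by simpa [hE] using fun h' => hsm),
          indicator_of_notMem (by simpa using hsm)]
    simp_rw [hinner]
    rw [setIntegral_indicator measurableSet_Ici]
    have hset : Ioc a x ∩ Ici t = Icc t x := by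
      ext s
      simp only [Set.mem_inter_iff, Set.mem_Ioc, Set.mem_Ici, Set.mem_Icc]
      constructor
      · rintro ⟨⟨_, h2⟩, h3⟩; exact ⟨h3, h2⟩
      · rintro ⟨h1, h2⟩; exact ⟨⟨lt_of_lt_of_le ht.1 h1, h2⟩, h1⟩
    rw [hset, integral_Icc_eq_integral_Ioc, ← intervalIntegral.integral_of_le ht.2,
      intervalIntegral.integral_const_mul]
    congr 1
    exact intervalIntegral.integral_eq_sub_of_hasDerivAt (fun s _ => hg s)
      (hg'.intervalIntegrable t x)
  -- step 4: final
  have hgc : Continuous g := continuous_iff_continuousAt.mpr fun s => (hg s).continuousAt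
  have hfg : IntegrableOn (fun t => f t * g t) (Ioc a x) volume :=
    (hf.mul_continuousOn hgc.continuousOn).1
  have step4 : ∫ t in Ioc a x, f t * (g x - g t)
      = (∫ t in a..x, f t) * g x - ∫ t in a..x, f t * g t := by
    rw [intervalIntegral.integral_of_le hax, intervalIntegral.integral_of_le hax]
    simp_rw [mul_sub]
    rw [MeasureTheory.integral_sub (hfI.mul_const (g x)) hfg, MeasureTheory.integral_mul_const]
  rw [step1, step2, step3, step4]

lemma hb_loc {c d p q M : ℝ} {b : ℝ → ℝ} (hcp : c ≤ p) (hqd : q ≤ d)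
    (hb : ∀ᵐ x ∂(volume.restrict (Ioo c d)), |b x| ≤ M) :
    ∀ᵐ t ∂(volume.restrict (Icc p q)), |b t| ≤ M := by
  have h1 : ∀ᵐ t ∂(volume.restrict (Ioo p q)), |b t| ≤ M :=
    ae_restrict_of_ae_restrict_of_subset (Ioo_subset_Ioo hcp hqd) hb
  rwa [Measure.restrict_congr_set Ioo_ae_eq_Icc] at h1

lemma wron {c d L : ℝ} {b u v w w₁ : ℝ → ℝ} (hcd : c ≤ d)
    (hu : ContinuousOn u (Icc c d))
    (hvi : IntervalIntegrable v volume c d)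
    (hbui : IntervalIntegrable (fun t => b t * u t) volume c d)
    (h1 : ∀ x ∈ Icc c d, u x = u c + ∫ t in c..x, v t)
    (h2 : ∀ x ∈ Icc c d, v x = v c - ∫ t in c..x, b t * u t)
    (hw : ∀ s, HasDerivAt w (w₁ s) s) (hw₁ : ∀ s, HasDerivAt w₁ (-(L^2) * w s) s)
    {x : ℝ} (hx : x ∈ Icc c d) :
    v x * w x - u x * w₁ x
      = v c * w c - u c * w₁ c + ∫ t in c..x, (L^2 - b t) * (u t * w t) := by
  have hax : c ≤ x := hx.1
  have hIccsub : Icc c x ⊆ Icc c d := Icc_subset_Icc le_rfl hx.2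
  have hsub : uIcc c x ⊆ uIcc c d := by
    rw [uIcc_of_le hax, uIcc_of_le hcd]; exact hIccsub
  have hvix : IntervalIntegrable v volume c x := hvi.mono_set hsub
  have hbuix : IntervalIntegrable (fun t => b t * u t) volume c x := hbui.mono_set hsub
  have hwc : Continuous w := continuous_iff_continuousAt.mpr fun s => (hw s).continuousAt
  have hw₁c : Continuous w₁ := continuous_iff_continuousAt.mpr fun s => (hw₁ s).continuousAt
  have hux : ContinuousOn u (Icc c x) := hu.mono hIccsub
  -- IBP applications
  have IBP1 := ibp hax hbuix hw hw₁c
  have IBP2 := ibp hax hvix hw₁ (continuous_const.mul hwc)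
  -- replace primitives using h1, h2
  have e1 : ∫ s in c..x, (∫ t in c..s, b t * u t) * w₁ s
      = ∫ s in c..x, (v c - v s) * w₁ s := by
    apply intervalIntegral.integral_congr
    intro s hs
    rw [uIcc_of_le hax] at hs
    have := h2 s (hIccsub hs)
    simp only []
    rw [show (∫ t in c..s, b t * u t) = v c - v s by rw [this]; ring]
  have e2 : ∫ s in c..x, (∫ t in c..s, v t) * (-(L^2) * w s)
      = ∫ s in c..x, (u s - u c) * (-(L^2) * w s) := by
    apply intervalIntegral.integral_congr
    intro s hs
    rw [uIcc_of_le hax] at hs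
    have := h1 s (hIccsub hs)
    simp only []
    rw [show (∫ t in c..s, v t) = u s - u c by rw [this]; ring]
  rw [e1] at IBP1
  rw [e2] at IBP2
  -- FTC for w and w₁
  have ftc1 : ∫ s in c..x, w₁ s = w x - w c :=
    intervalIntegral.integral_eq_sub_of_hasDerivAt (fun s _ => hw s)
      (hw₁c.intervalIntegrable c x)
  have ftc2 : ∫ s in c..x, -(L^2) * w s = w₁ x - w₁ c :=
    intervalIntegral.integral_eq_sub_of_hasDerivAt (fun s _ => hw₁ s)
      ((continuous_const.mul hwc).intervalIntegrable c x)
  -- expand the two integrals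
  have hvw₁ : IntervalIntegrable (fun s => v s * w₁ s) volume c x :=
    hvix.mul_continuousOn hw₁c.continuousOn
  have hcw₁ : IntervalIntegrable (fun s => v c * w₁ s) volume c x :=
    (hw₁c.intervalIntegrable c x).const_mul (v c)
  have expand1 : ∫ s in c..x, (v c - v s) * w₁ s
      = v c * (w x - w c) - ∫ s in c..x, v s * w₁ s := by
    rw [show (fun s => (v c - v s) * w₁ s) = fun s => v c * w₁ s - v s * w₁ s by
      funext s; ring]
    rw [intervalIntegral.integral_sub hcw₁ hvw₁, intervalIntegral.integral_const_mul, ftc1]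
  have huLw : IntervalIntegrable (fun s => u s * (-(L^2) * w s)) volume c x :=
    (hux.mul (continuous_const.mul hwc).continuousOn).intervalIntegrable_of_Icc hax
  have hcLw : IntervalIntegrable (fun s => u c * (-(L^2) * w s)) volume c x :=
    (((continuous_const.mul hwc).intervalIntegrable c x).const_mul (u c))
  have huw : IntervalIntegrable (fun s => u s * w s) volume c x :=
    (hux.mul hwc.continuousOn).intervalIntegrable_of_Icc hax
  have expand2 : ∫ s in c..x, (u s - u c) * (-(L^2) * w s)
      = -(L^2) * (∫ s in c..x, u s * w s) - u c * (w₁ x - w₁ c) := by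
    rw [show (fun s => (u s - u c) * (-(L^2) * w s))
        = fun s => u s * (-(L^2) * w s) - u c * (-(L^2) * w s) by funext s; ring]
    rw [intervalIntegral.integral_sub huLw hcLw]
    rw [show (fun s => u s * (-(L^2) * w s)) = fun s => -(L^2) * (u s * w s) by
      funext s; ring]
    rw [intervalIntegral.integral_const_mul, intervalIntegral.integral_const_mul, ftc2]
  rw [expand1] at IBP1
  rw [expand2] at IBP2
  -- final integral split
  have hbuw : IntervalIntegrable (fun t => (b t * u t) * w t) volume c x :=
    hbuix.mul_continuousOn hwc.continuousOn
  have hLuw : IntervalIntegrable (fun t => L^2 * (u t * w t)) volume c x :=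
    huw.const_mul _
  have final : ∫ t in c..x, (L^2 - b t) * (u t * w t)
      = L^2 * (∫ t in c..x, u t * w t) - ∫ t in c..x, (b t * u t) * w t := by
    rw [show (fun t => (L^2 - b t) * (u t * w t))
        = fun t => L^2 * (u t * w t) - (b t * u t) * w t by funext t; ring]
    rw [intervalIntegral.integral_sub hLuw hbuw, intervalIntegral.integral_const_mul]
  rw [final]
  -- now linear algebra
  have hux' : u x = u c + ∫ t in c..x, v t := h1 x hx
  have hvx' : v x = v c - ∫ t in c..x, b t * u t := h2 x hx
  rw [hux', hvx']
  nlinarith [IBP1, IBP2]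

lemma uniq {c d M : ℝ} {b u v : ℝ → ℝ} (hcd : c ≤ d) (hM : 0 ≤ M)
    (hb : ∀ᵐ x ∂(volume.restrict (Ioo c d)), |b x| ≤ M)
    (hu : ContinuousOn u (Icc c d)) (hv : ContinuousOn v (Icc c d))
    (hvi : IntervalIntegrable v volume c d)
    (hbui : IntervalIntegrable (fun t => b t * u t) volume c d)
    (h1 : ∀ x ∈ Icc c d, u x = u c + ∫ t in c..x, v t)
    (h2 : ∀ x ∈ Icc c d, v x = v c - ∫ t in c..x, b t * u t)
    {x₀ : ℝ} (hx₀ : x₀ ∈ Icc c d) (hu0 : u x₀ = 0) (hv0 : v x₀ = 0) :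
    ∀ x ∈ Icc c d, u x = 0 := by
  set φ : ℝ → ℝ := fun t => |u t| + |v t| with hφdef
  have hφc : ContinuousOn φ (Icc c d) := (hu.abs).add (hv.abs)
  have hvsub : ∀ {p q : ℝ}, p ∈ Icc c d → q ∈ Icc c d →
      IntervalIntegrable v volume p q := by
    intro p q hp hq
    exact hvi.mono_set (by rw [uIcc_of_le hcd]; exact uIcc_subset_Icc hp hq)
  have hbusub : ∀ {p q : ℝ}, p ∈ Icc c d → q ∈ Icc c d →
      IntervalIntegrable (fun t => b t * u t) volume p q := by
    intro p q hp hq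
    exact hbui.mono_set (by rw [uIcc_of_le hcd]; exact uIcc_subset_Icc hp hq)
  have hcmem : c ∈ Icc c d := left_mem_Icc.mpr hcd
  -- equations based at x₀
  have h1' : ∀ x ∈ Icc c d, u x = ∫ t in x₀..x, v t := by
    intro x hx
    have hadd := intervalIntegral.integral_add_adjacent_intervals
      (hvsub hcmem hx₀) (hvsub hx₀ hx)
    have e1 := h1 x hx
    have e0 := h1 x₀ hx₀
    rw [hu0] at e0
    linarith [hadd, e1, e0]
  have h2' : ∀ x ∈ Icc c d, v x = - ∫ t in x₀..x, b t * u t := by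
    intro x hx
    have hadd := intervalIntegral.integral_add_adjacent_intervals
      (hbusub hcmem hx₀) (hbusub hx₀ hx)
    have e1 := h2 x hx
    have e0 := h2 x₀ hx₀
    rw [hv0] at e0
    linarith [hadd, e1, e0]
  -- forward Gronwall on [x₀, d]
  have hfwd : ∀ t ∈ Icc x₀ d, φ t ≤ 0 + (1 + M) * ∫ s in x₀..t, φ s := by
    intro t ht
    have htd : t ∈ Icc c d := ⟨hx₀.1.trans ht.1, ht.2⟩
    have hx₀t : x₀ ≤ t := ht.1
    have hφi : IntervalIntegrable φ volume x₀ t :=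
      (hφc.mono (Icc_subset_Icc hx₀.1 htd.2)).intervalIntegrable_of_Icc hx₀t
    have hvi' := hvsub hx₀ htd
    have hbui' := hbusub hx₀ htd
    have bound1 : |u t| ≤ ∫ s in x₀..t, φ s := by
      rw [h1' t htd]
      refine le_trans (intervalIntegral.abs_integral_le_integral_abs hx₀t) ?_
      exact intervalIntegral.integral_mono_on hx₀t hvi'.abs hφi
        (fun s _ => le_add_of_nonneg_left (abs_nonneg _))
    have bound2 : |v t| ≤ M * ∫ s in x₀..t, φ s := by
      rw [h2' t htd, abs_neg]
      refine le_trans (intervalIntegral.abs_integral_le_integral_abs hx₀t) ?_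
      rw [← intervalIntegral.integral_const_mul]
      refine intervalIntegral.integral_mono_ae_restrict hx₀t hbui'.abs
        (hφi.const_mul M) ?_
      filter_upwards [hb_loc hx₀.1 htd.2 hb] with s hbs
      calc |b s * u s| = |b s| * |u s| := abs_mul _ _
        _ ≤ M * |u s| := mul_le_mul_of_nonneg_right hbs (abs_nonneg _)
        _ ≤ M * φ s := by
            have : |u s| ≤ φ s := le_add_of_nonneg_right (abs_nonneg _)
            exact mul_le_mul_of_nonneg_left this hM
    have hnn : 0 ≤ ∫ s in x₀..t, φ s := by
      apply intervalIntegral.integral_nonneg hx₀t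
      intro s _; positivity
    calc φ t = |u t| + |v t| := rfl
      _ ≤ (∫ s in x₀..t, φ s) + M * ∫ s in x₀..t, φ s := add_le_add bound1 bound2
      _ = 0 + (1 + M) * ∫ s in x₀..t, φ s := by ring
  have hfwd0 : ∀ t ∈ Icc x₀ d, u t = 0 := by
    intro t ht
    have := gron_fwd hx₀.2 (by linarith : (0:ℝ) ≤ 1 + M)
      (hφc.mono (Icc_subset_Icc hx₀.1 le_rfl)) hfwd t ht
    simp only [zero_mul] at this
    have h1 : |u t| ≤ 0 := le_trans (le_add_of_nonneg_right (abs_nonneg _)) this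
    exact abs_eq_zero.mp (le_antisymm h1 (abs_nonneg _))
  -- backward Gronwall on [c, x₀]
  have hbwd : ∀ t ∈ Icc c x₀, φ t ≤ 0 + (1 + M) * ∫ s in t..x₀, φ s := by
    intro t ht
    have htd : t ∈ Icc c d := ⟨ht.1, ht.2.trans hx₀.2⟩
    have htx₀ : t ≤ x₀ := ht.2
    have hφi : IntervalIntegrable φ volume t x₀ :=
      (hφc.mono (Icc_subset_Icc htd.1 hx₀.2)).intervalIntegrable_of_Icc htx₀
    have hvi' := hvsub htd hx₀
    have hbui' := hbusub htd hx₀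
    have bound1 : |u t| ≤ ∫ s in t..x₀, φ s := by
      rw [h1' t htd, intervalIntegral.integral_symm, abs_neg]
      refine le_trans (intervalIntegral.abs_integral_le_integral_abs htx₀) ?_
      exact intervalIntegral.integral_mono_on htx₀ hvi'.abs hφi
        (fun s _ => le_add_of_nonneg_left (abs_nonneg _))
    have bound2 : |v t| ≤ M * ∫ s in t..x₀, φ s := by
      rw [h2' t htd, abs_neg, intervalIntegral.integral_symm, abs_neg]
      refine le_trans (intervalIntegral.abs_integral_le_integral_abs htx₀) ?_
      rw [← intervalIntegral.integral_const_mul]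
      refine intervalIntegral.integral_mono_ae_restrict htx₀ hbui'.abs
        (hφi.const_mul M) ?_
      filter_upwards [hb_loc htd.1 hx₀.2 hb] with s hbs
      calc |b s * u s| = |b s| * |u s| := abs_mul _ _
        _ ≤ M * |u s| := mul_le_mul_of_nonneg_right hbs (abs_nonneg _)
        _ ≤ M * φ s := by
            have : |u s| ≤ φ s := le_add_of_nonneg_right (abs_nonneg _)
            exact mul_le_mul_of_nonneg_left this hM
    calc φ t = |u t| + |v t| := rfl
      _ ≤ (∫ s in t..x₀, φ s) + M * ∫ s in t..x₀, φ s := add_le_add bound1 bound2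
      _ = 0 + (1 + M) * ∫ s in t..x₀, φ s := by ring
  have hbwd0 : ∀ t ∈ Icc c x₀, u t = 0 := by
    intro t ht
    have := gron_bwd hx₀.1 (by linarith : (0:ℝ) ≤ 1 + M)
      (hφc.mono (Icc_subset_Icc le_rfl hx₀.2)) hbwd t ht
    simp only [zero_mul] at this
    have h1 : |u t| ≤ 0 := le_trans (le_add_of_nonneg_right (abs_nonneg _)) this
    exact abs_eq_zero.mp (le_antisymm h1 (abs_nonneg _))
  intro x hx
  rcases le_total x x₀ with h | h
  · exact hbwd0 x ⟨hx.1, h⟩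
  · exact hfwd0 x ⟨h, hx.2⟩

lemma bootstrap {c d M : ℝ} {b u v : ℝ → ℝ} (hcd : c ≤ d) (hM : 0 ≤ M)
    (hmeas : AEStronglyMeasurable b (volume.restrict (Ioo c d)))
    (hb : ∀ᵐ x ∂(volume.restrict (Ioo c d)), |b x| ≤ M)
    (h1 : ∀ x ∈ Icc c d, u x = u c + ∫ t in c..x, v t)
    (h2 : ∀ x ∈ Icc c d, v x = v c - ∫ t in c..x, b t * u t) :
    ContinuousOn u (Icc c d) ∧ ContinuousOn v (Icc c d) ∧
    IntervalIntegrable v volume c d ∧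
    IntervalIntegrable (fun t => b t * u t) volume c d := by
  set B : ℝ := (|u c| + |v c|) * Real.exp ((1 + M) * (d - c)) with hB
  have hBnn : 0 ≤ B := by positivity
  -- integrable from AESM + bound on subintervals
  have hIntOfBdd : ∀ (f : ℝ → ℝ) (x C : ℝ), c ≤ x → x ≤ d →
      AEStronglyMeasurable f (volume.restrict (Ioc c x)) →
      (∀ᵐ t ∂(volume.restrict (Ioc c x)), ‖f t‖ ≤ C) →
      IntervalIntegrable f volume c x := by
    intro f x C hcx hxd hfm hfb
    rw [intervalIntegrable_iff_integrableOn_Ioc_of_le hcx]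
    haveI : IsFiniteMeasure (volume.restrict (Ioc c x)) := by
      constructor
      rw [Measure.restrict_apply_univ]
      exact measure_Ioc_lt_top
    exact ⟨hfm, HasFiniteIntegral.of_bounded hfb⟩
  -- b restricted a.e.-measurability on subintervals
  have hbm : ∀ x, c ≤ x → x ≤ d →
      AEStronglyMeasurable b (volume.restrict (Ioc c x)) := by
    intro x hcx hxd
    rw [← Measure.restrict_congr_set Ioo_ae_eq_Ioc]
    exact hmeas.mono_measure (Measure.restrict_mono (Ioo_subset_Ioo le_rfl hxd) le_rfl)
  have hbb : ∀ x, c ≤ x → x ≤ d →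
      ∀ᵐ t ∂(volume.restrict (Ioc c x)), |b t| ≤ M := by
    intro x hcx hxd
    have := hb_loc (le_refl c) hxd hb
    exact ae_restrict_of_ae_restrict_of_subset Ioc_subset_Icc_self this
  -- the basic bootstrap step
  have step : ∀ x ∈ Icc c d, IntervalIntegrable (fun t => b t * u t) volume c x →
      ContinuousOn v (Icc c x) ∧ ContinuousOn u (Icc c x) ∧
      IntervalIntegrable v volume c x := by
    intro x hx hQ
    have hcx : c ≤ x := hx.1
    have hsub : Icc c x ⊆ Icc c d := Icc_subset_Icc le_rfl hx.2
    have hvcont : ContinuousOn v (Icc c x) := by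
      have hP : ContinuousOn (fun s => ∫ t in c..s, b t * u t) (Icc c x) := by
        have := intervalIntegral.continuousOn_primitive_interval (a := c) (b := x)
          (μ := volume) (f := fun t => b t * u t) ?_
        · rwa [uIcc_of_le hcx] at this
        · rw [uIcc_of_le hcx, integrableOn_Icc_iff_integrableOn_Ioc]
          exact hQ.1
      exact (continuousOn_const.sub hP).congr fun s hs => h2 s (hsub hs)
    have hvint : IntervalIntegrable v volume c x := hvcont.intervalIntegrable_of_Icc hcx
    have hucont : ContinuousOn u (Icc c x) := by
      have hP : ContinuousOn (fun s => ∫ t in c..s, v t) (Icc c x) := by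
        have := intervalIntegral.continuousOn_primitive_interval (a := c) (b := x)
          (μ := volume) (f := v) ?_
        · rwa [uIcc_of_le hcx] at this
        · rw [uIcc_of_le hcx, integrableOn_Icc_iff_integrableOn_Ioc]
          exact hvint.1
      exact (continuousOn_const.add hP).congr fun s hs => h1 s (hsub hs)
    exact ⟨hvcont, hucont, hvint⟩
  -- Gronwall bound
  have bdd : ∀ x ∈ Icc c d, IntervalIntegrable (fun t => b t * u t) volume c x →
      ∀ y ∈ Icc c x, |u y| ≤ B := by
    intro x hx hQ y hy
    obtain ⟨hvcont, hucont, hvint⟩ := step x hx hQ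
    have hcx : c ≤ x := hx.1
    set φ : ℝ → ℝ := fun t => |u t| + |v t| with hφdef
    have hφc : ContinuousOn φ (Icc c x) := hucont.abs.add hvcont.abs
    have key : ∀ t ∈ Icc c x, φ t ≤ (|u c| + |v c|) + (1 + M) * ∫ s in c..t, φ s := by
      intro t ht
      have hct : c ≤ t := ht.1
      have hsub' : uIcc c t ⊆ uIcc c x := by
        rw [uIcc_of_le hct, uIcc_of_le hcx]
        exact Icc_subset_Icc le_rfl ht.2
      have hφi : IntervalIntegrable φ volume c t :=
        (hφc.mono (Icc_subset_Icc le_rfl ht.2)).intervalIntegrable_of_Icc hct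
      have hvi' : IntervalIntegrable v volume c t := hvint.mono_set hsub'
      have hbui' : IntervalIntegrable (fun t => b t * u t) volume c t := hQ.mono_set hsub'
      have bound1 : |u t| ≤ |u c| + ∫ s in c..t, φ s := by
        rw [h1 t (Icc_subset_Icc le_rfl hx.2 ht)]
        refine le_trans (abs_add_le _ _) (add_le_add le_rfl ?_)
        refine le_trans (intervalIntegral.abs_integral_le_integral_abs hct) ?_
        exact intervalIntegral.integral_mono_on hct hvi'.abs hφi
          (fun s _ => le_add_of_nonneg_left (abs_nonneg _))
      have bound2 : |v t| ≤ |v c| + M * ∫ s in c..t, φ s := by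
        rw [h2 t (Icc_subset_Icc le_rfl hx.2 ht)]
        refine le_trans (abs_sub _ _) (add_le_add le_rfl ?_)
        refine le_trans (intervalIntegral.abs_integral_le_integral_abs hct) ?_
        rw [← intervalIntegral.integral_const_mul]
        refine intervalIntegral.integral_mono_ae_restrict hct hbui'.abs
          (hφi.const_mul M) ?_
        filter_upwards [hb_loc (le_refl c) (ht.2.trans hx.2) hb] with s hbs
        calc |b s * u s| = |b s| * |u s| := abs_mul _ _
          _ ≤ M * |u s| := mul_le_mul_of_nonneg_right hbs (abs_nonneg _)
          _ ≤ M * φ s := mul_le_mul_of_nonneg_left (le_add_of_nonneg_right (abs_nonneg _)) hM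
      calc φ t = |u t| + |v t| := rfl
        _ ≤ (|u c| + ∫ s in c..t, φ s) + (|v c| + M * ∫ s in c..t, φ s) :=
            add_le_add bound1 bound2
        _ = (|u c| + |v c|) + (1 + M) * ∫ s in c..t, φ s := by ring
    have := gron_fwd hcx (by linarith : (0:ℝ) ≤ 1 + M) hφc key y hy
    have hexp : Real.exp ((1 + M) * (y - c)) ≤ Real.exp ((1 + M) * (d - c)) := by
      apply Real.exp_le_exp.mpr
      have : y - c ≤ d - c := by
        have := hy.2.trans hx.2
        linarith
      nlinarith
    have h1' : |u y| ≤ φ y := le_add_of_nonneg_right (abs_nonneg _)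
    calc |u y| ≤ φ y := h1'
      _ ≤ (|u c| + |v c|) * Real.exp ((1 + M) * (y - c)) := this
      _ ≤ B := by
          rw [hB]
          apply mul_le_mul_of_nonneg_left hexp (by positivity)
  -- the set of good right endpoints
  set D := {x | x ∈ Icc c d ∧ IntervalIntegrable (fun t => b t * u t) volume c x} with hD
  have hcD : c ∈ D := by
    refine ⟨left_mem_Icc.mpr hcd, ?_⟩
    rw [intervalIntegrable_iff_integrableOn_Ioc_of_le le_rfl]
    simp
  have hDb : BddAbove D := ⟨d, fun x hx => hx.1.2⟩
  set s := sSup D with hs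
  have hcs : c ≤ s := le_csSup hDb hcD
  have hsd : s ≤ d := csSup_le ⟨c, hcD⟩ (fun x hx => hx.1.2)
  have hsIcc : s ∈ Icc c d := ⟨hcs, hsd⟩
  -- continuity (within) and bound of u on Ico c s
  have huIco : ∀ y ∈ Ico c s, ContinuousWithinAt u (Ico c s) y ∧ |u y| ≤ B := by
    intro y hy
    obtain ⟨x, hxD, hyx⟩ := exists_lt_of_lt_csSup ⟨c, hcD⟩ hy.2
    obtain ⟨_, hucont, _⟩ := step x hxD.1 hxD.2
    constructor
    · have hcw : ContinuousWithinAt u (Icc c x) y := hucont y ⟨hy.1, hyx.le⟩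
      apply hcw.mono_of_mem_nhdsWithin
      apply Filter.mem_of_superset (inter_mem_nhdsWithin (Ico c s) (Iio_mem_nhds hyx))
      rintro z ⟨hz1, hz2⟩
      exact ⟨hz1.1, hz2.le⟩
    · exact bdd x hxD.1 hxD.2 y ⟨hy.1, hyx.le⟩
  have hsD : s ∈ D := by
    refine ⟨hsIcc, ?_⟩
    apply hIntOfBdd _ s (M * B) hcs hsd
    · rw [← Measure.restrict_congr_set Ioo_ae_eq_Ioc]
      apply AEStronglyMeasurable.mul
      · exact hmeas.mono_measure (Measure.restrict_mono (Ioo_subset_Ioo le_rfl hsd) le_rfl)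
      · have hco : ContinuousOn u (Ioo c s) := fun y hy =>
          ((huIco y ⟨hy.1.le, hy.2⟩).1.mono Ioo_subset_Ico_self)
        exact hco.aestronglyMeasurable measurableSet_Ioo
    · rw [← Measure.restrict_congr_set Ioo_ae_eq_Ioc]
      have hae := ae_restrict_of_ae_restrict_of_subset (Ioo_subset_Ioo le_rfl hsd) hb
      filter_upwards [hae, ae_restrict_mem measurableSet_Ioo] with t htb htm
      rw [Real.norm_eq_abs, abs_mul]
      exact mul_le_mul htb (huIco t ⟨htm.1.le, htm.2⟩).2 (abs_nonneg _) hM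
  have hsd_eq : s = d := by
    by_contra hne
    have hslt : s < d := lt_of_le_of_ne hsd hne
    obtain ⟨hvconts, huconts, hvints⟩ := step s hsIcc hsD.2
    -- u is constant past s
    have hut : ∀ t ∈ Ioc s d, u t = u c := by
      intro t ht
      have htIcc : t ∈ Icc c d := ⟨hcs.trans ht.1.le, ht.2⟩
      have hct : c ≤ t := htIcc.1
      have hnv : ¬ IntervalIntegrable v volume c t := by
        intro hvt
        have hucont : ContinuousOn u (Icc c t) := by
          have hP : ContinuousOn (fun s' => ∫ r in c..s', v r) (Icc c t) := by
            have := intervalIntegral.continuousOn_primitive_interval (a := c) (b := t)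
              (μ := volume) (f := v) ?_
            · rwa [uIcc_of_le hct] at this
            · rw [uIcc_of_le hct, integrableOn_Icc_iff_integrableOn_Ioc]
              exact hvt.1
          exact (continuousOn_const.add hP).congr
            fun r hr => h1 r (Icc_subset_Icc le_rfl htIcc.2 hr)
        obtain ⟨C, hC⟩ := isCompact_Icc.exists_bound_of_continuousOn hucont
        have hC0 : 0 ≤ C := (norm_nonneg (u c)).trans (hC c (left_mem_Icc.mpr hct))
        have htD : t ∈ D := by
          refine ⟨htIcc, ?_⟩
          apply hIntOfBdd _ t (M * C) hct htIcc.2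
          · apply AEStronglyMeasurable.mul (hbm t hct htIcc.2)
            exact ((hucont.mono Ioc_subset_Icc_self).aestronglyMeasurable
              measurableSet_Ioc)
          · filter_upwards [hbb t hct htIcc.2, ae_restrict_mem measurableSet_Ioc]
              with r hrb hrm
            rw [Real.norm_eq_abs, abs_mul]
            have : |u r| ≤ C := by
              have := hC r (Ioc_subset_Icc_self hrm)
              rwa [Real.norm_eq_abs] at this
            exact mul_le_mul hrb this (abs_nonneg _) hM
        have := le_csSup hDb htD
        linarith [ht.1]
      rw [h1 t htIcc, intervalIntegral.integral_undef hnv, add_zero]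
    -- global bound and measurability of u, giving d ∈ D
    set B' := max B |u c| with hB'
    have hbd' : ∀ y ∈ Ioc c d, |u y| ≤ B' := by
      intro y hy
      rcases le_or_gt y s with h | h
      · exact le_trans (bdd s hsIcc hsD.2 y ⟨hy.1.le, h⟩) (le_max_left _ _)
      · rw [hut y ⟨h, hy.2⟩]
        exact le_max_right _ _
    have huAESM : AEStronglyMeasurable u (volume.restrict (Ioc c d)) := by
      rw [← Ioc_union_Ioc_eq_Ioc hcs hsd, aestronglyMeasurable_union_iff]
      constructor
      · exact (huconts.mono Ioc_subset_Icc_self).aestronglyMeasurable measurableSet_Ioc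
      · apply aestronglyMeasurable_const.congr
        rw [Filter.EventuallyEq]
        rw [ae_restrict_iff' measurableSet_Ioc]
        exact ae_of_all _ fun t ht => (hut t ht).symm
    have hdD : d ∈ D := by
      refine ⟨right_mem_Icc.mpr hcd, ?_⟩
      apply hIntOfBdd _ d (M * B') hcd le_rfl
      · exact (hbm d hcd le_rfl).mul huAESM
      · filter_upwards [hbb d hcd le_rfl, ae_restrict_mem measurableSet_Ioc] with t htb htm
        rw [Real.norm_eq_abs, abs_mul]
        exact mul_le_mul htb (hbd' t htm) (abs_nonneg _) (le_trans hM (by linarith))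
    have := le_csSup hDb hdD
    linarith
  rw [hsd_eq] at hsD
  obtain ⟨hvcont, hucont, hvint⟩ := step d (right_mem_Icc.mpr hcd) hsD.2
  exact ⟨hucont, hvcont, hvint, hsD.2⟩

lemma v_nonpos {c d : ℝ} {u v : ℝ → ℝ} (hcd : c ≤ d)
    (hv : ContinuousOn v (Icc c d))
    (hvi : IntervalIntegrable v volume c d)
    (h1 : ∀ x ∈ Icc c d, u x = u c + ∫ t in c..x, v t)
    {x₀ y₁ : ℝ} (hx₀ : x₀ ∈ Icc c d) (hy₁ : c ≤ y₁) (hy₁x : y₁ < x₀)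
    (hpos : ∀ y ∈ Ico y₁ x₀, 0 < u y) (hz : u x₀ = 0) : v x₀ ≤ 0 := by
  by_contra hvpos
  push_neg at hvpos
  have hvc : ContinuousWithinAt v (Icc c d) x₀ := hv x₀ hx₀
  have hev : {t | v t ∈ Ioi 0} ∈ 𝓝[Icc c d] x₀ := hvc (Ioi_mem_nhds hvpos)
  rw [Metric.mem_nhdsWithin_iff] at hev
  obtain ⟨δ, hδ, hball⟩ := hev
  set y := max y₁ (x₀ - δ/2) with hy
  have hyx : y < x₀ := max_lt hy₁x (by linarith)
  have hcy : c ≤ y := hy₁.trans (le_max_left _ _)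
  have hyIco : y ∈ Ico y₁ x₀ := ⟨le_max_left _ _, hyx⟩
  have hvposIoo : ∀ t ∈ Ioo y x₀, 0 < v t := by
    intro t ht
    have htIcc : t ∈ Icc c d := ⟨hcy.trans ht.1.le, ht.2.le.trans hx₀.2⟩
    have hdist : dist t x₀ < δ := by
      rw [Real.dist_eq, abs_lt]
      constructor
      · have : x₀ - δ/2 ≤ y := le_max_right _ _
        have := ht.1
        linarith
      · linarith [ht.2, hδ]
    exact hball ⟨Metric.mem_ball.mpr hdist, htIcc⟩
  have hint : IntervalIntegrable v volume y x₀ := by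
    apply hvi.mono_set
    rw [uIcc_of_le hyx.le, uIcc_of_le hcd]
    exact Icc_subset_Icc hcy hx₀.2
  have hI : 0 < ∫ t in y..x₀, v t :=
    intervalIntegral_pos_of_pos_on hint hvposIoo hyx
  have hintc : IntervalIntegrable v volume c y := by
    apply hvi.mono_set
    rw [uIcc_of_le hcy, uIcc_of_le hcd]
    exact Icc_subset_Icc le_rfl (hyx.le.trans hx₀.2)
  have hadd := intervalIntegral.integral_add_adjacent_intervals hintc hint
  have e1 := h1 x₀ hx₀
  have e2 := h1 y ⟨hcy, hyx.le.trans hx₀.2⟩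
  have hupos : 0 < u y := hpos y hyIco
  have : u x₀ = u y + ∫ t in y..x₀, v t := by
    rw [e1, e2]
    linarith [hadd]
  rw [hz] at this
  linarith

lemma not_const_contra {c d L M : ℝ} {b u w : ℝ → ℝ} (hcd : c < d)
    (hbM : ∀ᵐ x ∂(volume.restrict (Ioo c d)), |b x| ≤ M) (hLM : L^2 = M)
    (hnotconst : ¬ (∀ᵐ x ∂(volume.restrict (Ioo c d)), b x = M))
    (hint : IntervalIntegrable (fun t => (L^2 - b t) * (u t * w t)) volume c d)
    (hpos : ∀ t ∈ Ioo c d, 0 < u t * w t)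
    (hzero : ∫ t in c..d, (L^2 - b t) * (u t * w t) = 0) : False := by
  have hre : (volume : Measure ℝ).restrict (Ioc c d) = volume.restrict (Ioo c d) :=
    (Measure.restrict_congr_set Ioo_ae_eq_Ioc).symm
  rw [intervalIntegral.integral_of_le hcd.le, hre] at hzero
  have hint' : Integrable (fun t => (L^2 - b t) * (u t * w t))
      (volume.restrict (Ioo c d)) := by
    rw [← hre]
    exact hint.1
  have hnn : 0 ≤ᵐ[volume.restrict (Ioo c d)] fun t => (L^2 - b t) * (u t * w t) := by
    filter_upwards [hbM, ae_restrict_mem measurableSet_Ioo] with t htb htm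
    have h1 : b t ≤ M := le_trans (le_abs_self _) htb
    have h2 : 0 ≤ L^2 - b t := by rw [hLM]; linarith
    exact mul_nonneg h2 (hpos t htm).le
  have hae := (MeasureTheory.integral_eq_zero_iff_of_nonneg_ae
    (μ := volume.restrict (Ioo c d)) (f := fun t => (L^2 - b t) * (u t * w t)) hnn hint').mp hzero
  apply hnotconst
  filter_upwards [hae, ae_restrict_mem measurableSet_Ioo] with t h0 htm
  have hne : u t * w t ≠ 0 := (hpos t htm).ne'
  have : L^2 - b t = 0 := by
    by_contra h
    exact (mul_ne_zero h hne) h0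
  rw [← hLM]
  linarith

lemma key1 {c d M L : ℝ} {b u v : ℝ → ℝ} (hcd : c < d) (hM : 0 ≤ M)
    (hmeas : AEStronglyMeasurable b (volume.restrict (Ioo c d)))
    (hb : ∀ᵐ x ∂(volume.restrict (Ioo c d)), |b x| ≤ M)
    (hnotconst : ¬ (∀ᵐ x ∂(volume.restrict (Ioo c d)), b x = M))
    (hL : L = π / (2 * (d - c))) (hLM : L^2 = M)
    (h1 : ∀ x ∈ Icc c d, u x = u c + ∫ t in c..x, v t)
    (h2 : ∀ x ∈ Icc c d, v x = v c - ∫ t in c..x, b t * u t)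
    (hvc : v c = 0) (hud : u d = 0) (huc : 0 < u c) : False := by
  obtain ⟨hu, hv, hvi, hbui⟩ := bootstrap hcd.le hM hmeas hb h1 h2
  have hdc : (0:ℝ) < d - c := by linarith
  have hLpos : 0 < L := by rw [hL]; positivity
  have hLdc : L * (d - c) = π / 2 := by rw [hL]; field_simp
  set w : ℝ → ℝ := fun x => Real.cos (L * (x - c)) with hwdef
  set w₁ : ℝ → ℝ := fun x => -L * Real.sin (L * (x - c)) with hw₁def
  have hin : ∀ s : ℝ, HasDerivAt (fun x => L * (x - c)) L s := by
    intro s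
    simpa using ((hasDerivAt_id s).sub_const c).const_mul L
  have hderiv : ∀ s, HasDerivAt w (w₁ s) s := by
    intro s
    convert (hin s).cos using 1
    simp [hw₁def]; ring
  have hderiv₁ : ∀ s, HasDerivAt w₁ (-(L^2) * w s) s := by
    intro s
    refine (((hin s).sin).const_mul (-L)).congr_deriv ?_
    simp [hwdef]; ring
  have hang : ∀ t ∈ Icc c d, L * (t - c) ∈ Icc 0 (π/2) := by
    intro t ht
    constructor
    · exact mul_nonneg hLpos.le (by linarith [ht.1])
    · rw [← hLdc]
      exact mul_le_mul_of_nonneg_left (by linarith [ht.2]) hLpos.le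
  have hwnn : ∀ t ∈ Icc c d, 0 ≤ w t := by
    intro t ht
    exact Real.cos_nonneg_of_mem_Icc ⟨by linarith [(hang t ht).1, Real.pi_pos],
      (hang t ht).2⟩
  have hwpos : ∀ t ∈ Ico c d, 0 < w t := by
    intro t ht
    apply Real.cos_pos_of_mem_Ioo
    constructor
    · have := mul_nonneg hLpos.le (by linarith [ht.1] : (0:ℝ) ≤ t - c)
      linarith [Real.pi_pos]
    · rw [← hLdc]
      exact mul_lt_mul_of_pos_left (by linarith [ht.2]) hLpos
  have hwd : w d = 0 := by
    show Real.cos (L * (d - c)) = 0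
    rw [hLdc]; exact Real.cos_pi_div_two
  have hw₁c : w₁ c = 0 := by simp [hw₁def]
  have hwcont : Continuous w :=
    Real.continuous_cos.comp (continuous_const.mul (continuous_id.sub continuous_const))
  -- the zero set and its infimum
  set Z : Set ℝ := Icc c d ∩ u ⁻¹' {0} with hZdef
  have hZclosed : IsClosed Z :=
    hu.preimage_isClosed_of_isClosed isClosed_Icc isClosed_singleton
  have hZne : Z.Nonempty := ⟨d, ⟨right_mem_Icc.mpr hcd.le, by simp [hud]⟩⟩
  have hZbdd : BddBelow Z := ⟨c, fun x hx => hx.1.1⟩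
  set x₀ := sInf Z with hx₀def
  have hx₀Z : x₀ ∈ Z := hZclosed.csInf_mem hZne hZbdd
  have hx₀ : x₀ ∈ Icc c d := hx₀Z.1
  have hux₀ : u x₀ = 0 := hx₀Z.2
  have hcx₀ : c < x₀ := by
    rcases lt_or_eq_of_le hx₀.1 with h | h
    · exact h
    · exact absurd (h ▸ hux₀) huc.ne'
  have hposIco : ∀ y ∈ Ico c x₀, 0 < u y := by
    intro y hy
    have hyIcc : y ∈ Icc c d := ⟨hy.1, hy.2.le.trans hx₀.2⟩
    have hyne : u y ≠ 0 := fun h0 =>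
      absurd (csInf_le hZbdd ⟨hyIcc, by simp [h0]⟩) (not_le.mpr hy.2)
    rcases hyne.lt_or_gt with hneg | hpos
    · exfalso
      have hIVT := intermediate_value_Icc' hy.1 (hu.mono (Icc_subset_Icc le_rfl hyIcc.2))
      have h0mem : (0:ℝ) ∈ Icc (u y) (u c) := ⟨hneg.le, huc.le⟩
      obtain ⟨z, hz, hz0⟩ := hIVT h0mem
      have hzZ : z ∈ Z := ⟨⟨hz.1, hz.2.trans hyIcc.2⟩, by simp [hz0]⟩
      have := csInf_le hZbdd hzZ
      linarith [hz.2, hy.2]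
    · exact hpos
  have hunn : ∀ t ∈ Icc c x₀, 0 ≤ u t := by
    intro t ht
    rcases lt_or_eq_of_le ht.2 with h | h
    · exact (hposIco t ⟨ht.1, h⟩).le
    · rw [h, hux₀]
  have hintg : IntervalIntegrable (fun t => (L^2 - b t) * (u t * w t)) volume c d := by
    have e : (fun t => (L^2 - b t) * (u t * w t))
        = fun t => L^2 * (u t * w t) - (b t * u t) * w t := funext fun t => by ring
    rw [e]
    exact ((continuousOn_const.mul (hu.mul hwcont.continuousOn)).intervalIntegrable_of_Icc
      hcd.le).sub (hbui.mul_continuousOn hwcont.continuousOn)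
  have hInn : 0 ≤ ∫ t in c..x₀, (L^2 - b t) * (u t * w t) := by
    apply intervalIntegral.integral_nonneg_of_ae_restrict hx₀.1
    filter_upwards [hb_loc le_rfl hx₀.2 hb, ae_restrict_mem measurableSet_Icc] with t htb htm
    have h1' : b t ≤ M := le_trans (le_abs_self _) htb
    have h2' : 0 ≤ L^2 - b t := by rw [hLM]; linarith
    exact mul_nonneg h2' (mul_nonneg (hunn t htm)
      (hwnn t ⟨htm.1, htm.2.trans hx₀.2⟩))
  have hWc : v c * w c - u c * w₁ c = 0 := by rw [hvc, hw₁c]; ring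
  rcases eq_or_lt_of_le hx₀.2 with heq | hlt
  · -- x₀ = d : the integral over [c,d] vanishes
    have hWd := wron (b := b) hcd.le hu hvi hbui h1 h2 hderiv hderiv₁
      (right_mem_Icc.mpr hcd.le)
    rw [hud, hwd] at hWd
    have hzero : ∫ t in c..d, (L^2 - b t) * (u t * w t) = 0 := by
      have : (0:ℝ) = (v c * w c - u c * w₁ c) + ∫ t in c..d, (L^2 - b t) * (u t * w t) := by
        rw [← hWd]; ring
      rw [hWc] at this
      linarith
    have hposprod : ∀ t ∈ Ioo c d, 0 < u t * w t := fun t ht =>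
      mul_pos (hposIco t ⟨ht.1.le, heq ▸ ht.2⟩) (hwpos t ⟨ht.1.le, ht.2⟩)
    exact not_const_contra hcd hb hLM hnotconst hintg hposprod hzero
  · -- x₀ < d
    have hvx₀ : v x₀ ≤ 0 := v_nonpos hcd.le hv hvi h1 hx₀ le_rfl hcx₀ hposIco hux₀
    have hvx₀ne : v x₀ ≠ 0 := by
      intro h0
      have := uniq hcd.le hM hb hu hv hvi hbui h1 h2 hx₀ hux₀ h0 c
        (left_mem_Icc.mpr hcd.le)
      exact huc.ne' this
    have hvneg : v x₀ < 0 := lt_of_le_of_ne hvx₀ hvx₀ne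
    have hwx₀ : 0 < w x₀ := hwpos x₀ ⟨hx₀.1, hlt⟩
    have hWx₀ := wron (b := b) hcd.le hu hvi hbui h1 h2 hderiv hderiv₁ hx₀
    rw [hux₀] at hWx₀
    nlinarith [hWx₀, hWc, hInn, mul_pos (neg_pos.mpr hvneg) hwx₀]

lemma key2 {c d M L : ℝ} {b u v : ℝ → ℝ} (hcd : c < d) (hM : 0 ≤ M)
    (hmeas : AEStronglyMeasurable b (volume.restrict (Ioo c d)))
    (hb : ∀ᵐ x ∂(volume.restrict (Ioo c d)), |b x| ≤ M)
    (hnotconst : ¬ (∀ᵐ x ∂(volume.restrict (Ioo c d)), b x = M))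
    (hL : L = π / (2 * (d - c))) (hLM : L^2 = M)
    (h1 : ∀ x ∈ Icc c d, u x = u c + ∫ t in c..x, v t)
    (h2 : ∀ x ∈ Icc c d, v x = v c - ∫ t in c..x, b t * u t)
    (huc : u c = 0) (hvd : v d = 0) (hvc : 0 < v c) : False := by
  obtain ⟨hu, hv, hvi, hbui⟩ := bootstrap hcd.le hM hmeas hb h1 h2
  have hdc : (0:ℝ) < d - c := by linarith
  have hLpos : 0 < L := by rw [hL]; positivity
  have hLdc : L * (d - c) = π / 2 := by rw [hL]; field_simp
  set w : ℝ → ℝ := fun x => Real.sin (L * (x - c)) with hwdef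
  set w₁ : ℝ → ℝ := fun x => L * Real.cos (L * (x - c)) with hw₁def
  have hin : ∀ s : ℝ, HasDerivAt (fun x => L * (x - c)) L s := by
    intro s
    simpa using ((hasDerivAt_id s).sub_const c).const_mul L
  have hderiv : ∀ s, HasDerivAt w (w₁ s) s := by
    intro s
    convert (hin s).sin using 1
    simp [hw₁def]; ring
  have hderiv₁ : ∀ s, HasDerivAt w₁ (-(L^2) * w s) s := by
    intro s
    refine (((hin s).cos).const_mul L).congr_deriv ?_
    simp [hwdef]; ring
  have hang : ∀ t ∈ Icc c d, L * (t - c) ∈ Icc 0 (π/2) := by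
    intro t ht
    constructor
    · exact mul_nonneg hLpos.le (by linarith [ht.1])
    · rw [← hLdc]
      exact mul_le_mul_of_nonneg_left (by linarith [ht.2]) hLpos.le
  have hwnn : ∀ t ∈ Icc c d, 0 ≤ w t := by
    intro t ht
    exact Real.sin_nonneg_of_nonneg_of_le_pi (hang t ht).1
      (by linarith [(hang t ht).2, Real.pi_pos])
  have hwpos : ∀ t ∈ Ioc c d, 0 < w t := by
    intro t ht
    apply Real.sin_pos_of_pos_of_lt_pi
    · exact mul_pos hLpos (by linarith [ht.1])
    · have h2' := (hang t ⟨ht.1.le, ht.2⟩).2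
      linarith [Real.pi_pos]
  have hwc0 : w c = 0 := by simp [hwdef]
  have hw₁d : w₁ d = 0 := by
    show L * Real.cos (L * (d - c)) = 0
    rw [hLdc, Real.cos_pi_div_two, mul_zero]
  have hwcont : Continuous w :=
    Real.continuous_sin.comp (continuous_const.mul (continuous_id.sub continuous_const))
  have hWc : v c * w c - u c * w₁ c = 0 := by rw [huc, hwc0]; ring
  have hintg : IntervalIntegrable (fun t => (L^2 - b t) * (u t * w t)) volume c d := by
    have e : (fun t => (L^2 - b t) * (u t * w t))
        = fun t => L^2 * (u t * w t) - (b t * u t) * w t := funext fun t => by ring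
    rw [e]
    exact ((continuousOn_const.mul (hu.mul hwcont.continuousOn)).intervalIntegrable_of_Icc
      hcd.le).sub (hbui.mul_continuousOn hwcont.continuousOn)
  -- positivity of u just right of c
  have hvcw : ContinuousWithinAt v (Icc c d) c := hv c (left_mem_Icc.mpr hcd.le)
  have hev : {t | v t ∈ Ioi 0} ∈ 𝓝[Icc c d] c := hvcw (Ioi_mem_nhds hvc)
  rw [Metric.mem_nhdsWithin_iff] at hev
  obtain ⟨δ, hδ, hball⟩ := hev
  set e : ℝ := min d (c + δ/2) with hedef
  have hce : c < e := lt_min hcd (by linarith)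
  have hed : e ≤ d := min_le_left _ _
  have hue : ∀ y ∈ Ioc c e, 0 < u y := by
    intro y hy
    have hyIcc : y ∈ Icc c d := ⟨hy.1.le, hy.2.trans hed⟩
    have hvposIoo : ∀ t ∈ Ioo c y, 0 < v t := by
      intro t ht
      have htIcc : t ∈ Icc c d := ⟨ht.1.le, (ht.2.le.trans hy.2).trans hed⟩
      have hdist : dist t c < δ := by
        rw [Real.dist_eq, abs_lt]
        have hy2 : y ≤ c + δ/2 := hy.2.trans (min_le_right _ _)
        constructor <;> [linarith [ht.1]; linarith [ht.2]]
      exact hball ⟨Metric.mem_ball.mpr hdist, htIcc⟩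
    have hint : IntervalIntegrable v volume c y := by
      apply hvi.mono_set
      rw [uIcc_of_le hy.1.le, uIcc_of_le hcd.le]
      exact Icc_subset_Icc le_rfl hyIcc.2
    have hI : 0 < ∫ t in c..y, v t := intervalIntegral_pos_of_pos_on hint hvposIoo hy.1
    rw [h1 y hyIcc, huc, zero_add]
    exact hI
  -- the zero set beyond e
  set Z : Set ℝ := Icc e d ∩ u ⁻¹' {0} with hZdef
  have hZclosed : IsClosed Z :=
    (hu.mono (Icc_subset_Icc hce.le le_rfl)).preimage_isClosed_of_isClosed
      isClosed_Icc isClosed_singleton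
  rcases Z.eq_empty_or_nonempty with hZe | hZne
  · -- no zero: u > 0 on (c, d]
    have hposall : ∀ y ∈ Ioc c d, 0 < u y := by
      intro y hy
      rcases le_or_gt y e with h | h
      · exact hue y ⟨hy.1, h⟩
      · have hyne : u y ≠ 0 := by
          intro h0
          rw [eq_empty_iff_forall_notMem] at hZe
          exact hZe y ⟨⟨h.le, hy.2⟩, by simp [h0]⟩
        rcases hyne.lt_or_gt with hneg | hpos
        · exfalso
          have hIVT := intermediate_value_Icc' h.le
            (hu.mono (Icc_subset_Icc hce.le hy.2))
          have h0mem : (0:ℝ) ∈ Icc (u y) (u e) := ⟨hneg.le, (hue e ⟨hce, le_rfl⟩).le⟩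
          obtain ⟨z, hz, hz0⟩ := hIVT h0mem
          rw [eq_empty_iff_forall_notMem] at hZe
          exact hZe z ⟨⟨hz.1, hz.2.trans hy.2⟩, by simp [hz0]⟩
        · exact hpos
    have hWd := wron (b := b) hcd.le hu hvi hbui h1 h2 hderiv hderiv₁
      (right_mem_Icc.mpr hcd.le)
    rw [hvd, hw₁d] at hWd
    have hzero : ∫ t in c..d, (L^2 - b t) * (u t * w t) = 0 := by
      have : (0:ℝ) = (v c * w c - u c * w₁ c)
          + ∫ t in c..d, (L^2 - b t) * (u t * w t) := by rw [← hWd]; ring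
      rw [hWc] at this
      linarith
    have hposprod : ∀ t ∈ Ioo c d, 0 < u t * w t := fun t ht =>
      mul_pos (hposall t ⟨ht.1, ht.2.le⟩) (hwpos t ⟨ht.1, ht.2.le⟩)
    exact not_const_contra hcd hb hLM hnotconst hintg hposprod hzero
  · -- there is a zero: first zero x₀
    have hZbdd : BddBelow Z := ⟨e, fun x hx => hx.1.1⟩
    set x₀ := sInf Z with hx₀def
    have hx₀Z : x₀ ∈ Z := hZclosed.csInf_mem hZne hZbdd
    have hex₀le : e ≤ x₀ := hx₀Z.1.1
    have hx₀d : x₀ ≤ d := hx₀Z.1.2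
    have hux₀ : u x₀ = 0 := hx₀Z.2
    have hcx₀ : c < x₀ := hce.trans_le hex₀le
    have hx₀Icc : x₀ ∈ Icc c d := ⟨hcx₀.le, hx₀d⟩
    have hex₀ : e < x₀ := by
      rcases lt_or_eq_of_le hex₀le with h | h
      · exact h
      · exact absurd (h ▸ hux₀) (hue e ⟨hce, le_rfl⟩).ne'
    have hposIoo : ∀ y ∈ Ioo c x₀, 0 < u y := by
      intro y hy
      rcases le_or_gt y e with h | h
      · exact hue y ⟨hy.1, h⟩
      · have hyIcc : y ∈ Icc e d := ⟨h.le, hy.2.le.trans hx₀d⟩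
        have hyne : u y ≠ 0 := fun h0 =>
          absurd (csInf_le hZbdd ⟨hyIcc, by simp [h0]⟩) (not_le.mpr hy.2)
        rcases hyne.lt_or_gt with hneg | hpos
        · exfalso
          have hIVT := intermediate_value_Icc' h.le
            (hu.mono (Icc_subset_Icc hce.le hyIcc.2))
          have h0mem : (0:ℝ) ∈ Icc (u y) (u e) := ⟨hneg.le, (hue e ⟨hce, le_rfl⟩).le⟩
          obtain ⟨z, hz, hz0⟩ := hIVT h0mem
          have hzZ : z ∈ Z := ⟨⟨hz.1, hz.2.trans hyIcc.2⟩, by simp [hz0]⟩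
          have := csInf_le hZbdd hzZ
          linarith [hz.2, hy.2]
        · exact hpos
    have hposIcoe : ∀ y ∈ Ico e x₀, 0 < u y := by
      intro y hy
      rcases eq_or_lt_of_le hy.1 with h | h
      · rw [← h]; exact hue e ⟨hce, le_rfl⟩
      · exact hposIoo y ⟨hce.trans h, hy.2⟩
    have hunn : ∀ t ∈ Icc c x₀, 0 ≤ u t := by
      intro t ht
      rcases eq_or_lt_of_le ht.1 with h | h
      · rw [← h, huc]
      · rcases lt_or_eq_of_le ht.2 with h' | h'
        · exact (hposIoo t ⟨h, h'⟩).le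
        · rw [h', hux₀]
    have hInn : 0 ≤ ∫ t in c..x₀, (L^2 - b t) * (u t * w t) := by
      apply intervalIntegral.integral_nonneg_of_ae_restrict hcx₀.le
      filter_upwards [hb_loc le_rfl hx₀d hb, ae_restrict_mem measurableSet_Icc]
        with t htb htm
      have h1' : b t ≤ M := le_trans (le_abs_self _) htb
      have h2' : 0 ≤ L^2 - b t := by rw [hLM]; linarith
      exact mul_nonneg h2' (mul_nonneg (hunn t htm)
        (hwnn t ⟨htm.1, htm.2.trans hx₀d⟩))
    have hvx₀ : v x₀ ≤ 0 :=
      v_nonpos hcd.le hv hvi h1 hx₀Icc hce.le hex₀ hposIcoe hux₀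
    have hvx₀ne : v x₀ ≠ 0 := by
      intro h0
      have := uniq hcd.le hM hb hu hv hvi hbui h1 h2 hx₀Icc hux₀ h0 e ⟨hce.le, hed⟩
      exact (hue e ⟨hce, le_rfl⟩).ne' this
    have hvneg : v x₀ < 0 := lt_of_le_of_ne hvx₀ hvx₀ne
    have hwx₀ : 0 < w x₀ := hwpos x₀ ⟨hcx₀, hx₀d⟩
    have hWx₀ := wron (b := b) hcd.le hu hvi hbui h1 h2 hderiv hderiv₁ hx₀Icc
    rw [hux₀] at hWx₀
    nlinarith [hWx₀, hWc, hInn, mul_pos (neg_pos.mpr hvneg) hwx₀]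


/-- L∞ disfocality criterion: if ‖b‖_{L∞(c,d)} ≤ π²/(4(d-c)²) and b is not
a.e. equal to the constant π²/(4(d-c)²), then the only solution of u'' + bu = 0 with
u'(c) = 0, u(d) = 0 is trivial, and likewise for u(c) = 0, u'(d) = 0.
(Solutions are encoded in integral form, v being u'.) -/
theorem disfocality_Linfty (c d : ℝ) (hcd : c < d) (b : ℝ → ℝ)
    (hmeas : AEStronglyMeasurable b (volume.restrict (Ioo c d)))
    (hbound : ∀ᵐ x ∂(volume.restrict (Ioo c d)), |b x| ≤ π ^ 2 / (4 * (d - c) ^ 2))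
    (hnotconst : ¬ (∀ᵐ x ∂(volume.restrict (Ioo c d)), b x = π ^ 2 / (4 * (d - c) ^ 2))) :
    (∀ u v : ℝ → ℝ,
      (∀ x ∈ Icc c d, u x = u c + ∫ t in c..x, v t) →
      (∀ x ∈ Icc c d, v x = - ∫ t in c..x, b t * u t) →
      u d = 0 →
      ∀ x ∈ Icc c d, u x = 0) ∧
    (∀ u v : ℝ → ℝ,
      (∀ x ∈ Icc c d, u x = u c + ∫ t in c..x, v t) →
      (∀ x ∈ Icc c d, v x = v c - ∫ t in c..x, b t * u t) →
      u c = 0 → v d = 0 →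
      ∀ x ∈ Icc c d, u x = 0) := by
  have hdc : (0:ℝ) < d - c := by linarith
  have hM : (0:ℝ) ≤ π ^ 2 / (4 * (d - c) ^ 2) := by positivity
  have hL2 : (π / (2 * (d - c))) ^ 2 = π ^ 2 / (4 * (d - c) ^ 2) := by
    rw [div_pow]
    congr 1
    ring
  constructor
  · intro u v h1 h2 hud
    have hvc : v c = 0 := by
      have := h2 c (left_mem_Icc.mpr hcd.le)
      simpa using this
    have h2' : ∀ x ∈ Icc c d, v x = v c - ∫ t in c..x, b t * u t := by
      intro x hx
      rw [hvc, zero_sub]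
      exact h2 x hx
    rcases lt_trichotomy (u c) 0 with hneg | hzer | hpos
    · exfalso
      refine key1 (u := fun x => -u x) (v := fun x => -v x) hcd hM hmeas hbound hnotconst
        rfl hL2 ?_ ?_ ?_ ?_ ?_
      · intro x hx
        simp only [intervalIntegral.integral_neg]
        rw [h1 x hx]
        ring
      · intro x hx
        simp only [mul_neg, intervalIntegral.integral_neg]
        rw [h2' x hx]
        ring
      · simp [hvc]
      · simp [hud]
      · simpa using hneg
    · obtain ⟨hu, hv, hvi, hbui⟩ := bootstrap hcd.le hM hmeas hbound h1 h2'
      exact uniq hcd.le hM hbound hu hv hvi hbui h1 h2' (left_mem_Icc.mpr hcd.le) hzer hvc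
    · exact (key1 hcd hM hmeas hbound hnotconst rfl hL2 h1 h2' hvc hud hpos).elim
  · intro u v h1 h2 huc hvd
    rcases lt_trichotomy (v c) 0 with hneg | hzer | hpos
    · exfalso
      refine key2 (u := fun x => -u x) (v := fun x => -v x) hcd hM hmeas hbound hnotconst
        rfl hL2 ?_ ?_ ?_ ?_ ?_
      · intro x hx
        simp only [intervalIntegral.integral_neg]
        rw [h1 x hx]
        ring
      · intro x hx
        simp only [mul_neg, intervalIntegral.integral_neg]
        rw [h2 x hx]
        ring
      · simp [huc]
      · simp [hvd]
      · simpa using hneg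
    · obtain ⟨hu, hv, hvi, hbui⟩ := bootstrap hcd.le hM hmeas hbound h1 h2
      exact uniq hcd.le hM hbound hu hv hvi hbui h1 h2 (left_mem_Icc.mpr hcd.le) huc hzer
    · exact (key2 hcd hM hmeas hbound hnotconst rfl hL2 h1 h2 huc hvd hpos).elim
end

section
/- Let 0 = y₀ < y₁ < … < y_{2n+1} < y_{2n+2} = L and define a on (0,L) by a(x) = π²/(4(y_{i+1}-y_i)²) for x ∈ (y_i, y_{i+1}), 0 ≤ i ≤ 2n+1. Then the Neumann problem u'' + au = 0, u'(0) = u'(L) = 0 has a nontrivial solution, given piecewise by u(x) = k_i cos(π(x - y_i)/(2(y_{i+1}-y_i))) for i even and u(x) = k_i cos(π(y_{i+1} - x)/(2(y_{i+1}-y_i))) for i odd, for appropriate nonzero constants k_i ensuring C¹ matching. -/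
open MeasureTheory Real Set intervalIntegral

namespace PW17

noncomputable def glue (y : ℕ → ℝ) (p : ℕ → ℝ → ℝ) : ℕ → ℝ → ℝ
  | 0 => p 0
  | (i+1) => fun x => if y (i+1) ≤ x then p (i+1) x else glue y p i x

variable {y : ℕ → ℝ} {p q r : ℕ → ℝ → ℝ}

lemma glue_of_ge : ∀ {i : ℕ} {x : ℝ}, y i ≤ x → glue y p i x = p i x
  | 0, _, _ => rfl
  | (_+1), _, h => if_pos h

lemma glue_succ (i : ℕ) (x : ℝ) :
    glue y p (i+1) x = if y (i+1) ≤ x then p (i+1) x else glue y p i x := rfl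

lemma glue_eval {x : ℝ} : ∀ (m j : ℕ), j ≤ m → y j ≤ x →
    (∀ l, j < l → l ≤ m → x < y l) → glue y p m x = p j x := by
  intro m
  induction m with
  | zero => intro j hj _ _; interval_cases j; rfl
  | succ m ih =>
    intro j hj hyj hlt
    rcases Nat.eq_or_lt_of_le hj with h | h
    · subst h; exact glue_of_ge hyj
    · have hj' : j ≤ m := by omega
      rw [glue_succ, if_neg (not_le.2 (hlt (m+1) (by omega) le_rfl))]
      exact ih j hj' hyj (fun l h1 h2 => hlt l h1 (by omega))

lemma glue_continuous (hp : ∀ i, Continuous (p i)) :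
    ∀ m, (∀ i, i < m → y i ≤ y (i+1)) →
    (∀ i, i < m → p i (y (i+1)) = p (i+1) (y (i+1))) →
    Continuous (glue y p m) := by
  intro m
  induction m with
  | zero => intro _ _; exact hp 0
  | succ m ih =>
    intro hy hm
    have IH := ih (fun i hi => hy i (by omega)) (fun i hi => hm i (by omega))
    have : Continuous fun x : ℝ =>
        if (fun _ : ℝ => y (m+1)) x ≤ id x then p (m+1) x else glue y p m x := by
      refine Continuous.if_le (hp (m+1)) IH continuous_const continuous_id ?_
      intro x hx
      simp only [id_eq] at hx
      rw [← hx, glue_of_ge (hy m (by omega)), hm m (by omega)]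
    exact this

lemma glue_hasDerivAt (hpq : ∀ i x, HasDerivAt (p i) (q i x) x) :
    ∀ m, (∀ i, i < m → y i ≤ y (i+1)) →
    (∀ i, i < m → p i (y (i+1)) = p (i+1) (y (i+1))) →
    (∀ i, i < m → q i (y (i+1)) = q (i+1) (y (i+1))) →
    ∀ t : ℝ, HasDerivAt (glue y p m) (glue y q m t) t := by
  intro m
  induction m with
  | zero => intro _ _ _ t; exact hpq 0 t
  | succ m ih =>
    intro hy hmp hmq t
    have IH := ih (fun i hi => hy i (by omega)) (fun i hi => hmp i (by omega))
      (fun i hi => hmq i (by omega))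
    rcases lt_trichotomy t (y (m+1)) with h | h | h
    · have hev : glue y p (m+1) =ᶠ[nhds t] glue y p m :=
        Filter.eventually_of_mem (Iio_mem_nhds h)
          (fun x hx => if_neg (not_le.2 hx))
      have := (IH t).congr_of_eventuallyEq hev
      rwa [glue_succ, if_neg (not_le.2 h)]
    · have hle : y (m+1) ≤ t := le_of_eq h.symm
      have hvq : glue y q (m+1) t = q (m+1) t := if_pos hle
      rw [hvq]
      have hIic : HasDerivWithinAt (glue y p (m+1)) (q (m+1) t) (Iic t) t := by
        have hval : glue y q m t = q (m+1) t := by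
          rw [glue_of_ge (h ▸ hy m (by omega)), h, hmq m (by omega)]
        refine ((hval ▸ (IH t).hasDerivWithinAt : HasDerivWithinAt (glue y p m)
          (q (m+1) t) (Iic t) t)).congr ?_ ?_
        · intro x hx
          rcases eq_or_lt_of_le (mem_Iic.1 hx) with hxe | hxl
          · rw [glue_succ, hxe, if_pos hle, h, ← hmp m (by omega),
              glue_of_ge (hy m (by omega))]
          · rw [glue_succ, if_neg (not_le.2 (lt_of_lt_of_eq hxl h))]
        · rw [glue_succ, if_pos hle, h, ← hmp m (by omega), glue_of_ge (hy m (by omega))]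
      have hIci : HasDerivWithinAt (glue y p (m+1)) (q (m+1) t) (Ici t) t := by
        refine (hpq (m+1) t).hasDerivWithinAt.congr ?_ ?_
        · intro x hx; exact if_pos (hle.trans (mem_Ici.1 hx))
        · exact if_pos hle
      have := hIic.union hIci
      rw [Iic_union_Ici] at this
      exact hasDerivWithinAt_univ.1 this
    · have hev : glue y p (m+1) =ᶠ[nhds t] p (m+1) :=
        Filter.eventually_of_mem (Ioi_mem_nhds h)
          (fun x hx => if_pos (le_of_lt hx))
      have := (hpq (m+1) t).congr_of_eventuallyEq hev
      rwa [glue_succ, if_pos (le_of_lt h)]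

lemma glue_hasDerivWithinAt_Ioi (hqr : ∀ i x, HasDerivAt (q i) (r i x) x) :
    ∀ m, ∀ t : ℝ, HasDerivWithinAt (glue y q m) (glue y r m t) (Ioi t) t := by
  intro m
  induction m with
  | zero => intro t; exact (hqr 0 t).hasDerivWithinAt
  | succ m ih =>
    intro t
    by_cases h : y (m+1) ≤ t
    · rw [glue_succ (p := r), if_pos h]
      refine (hqr (m+1) t).hasDerivWithinAt.congr ?_ (if_pos h)
      intro x hx; exact if_pos (h.trans (le_of_lt (mem_Ioi.1 hx)))
    · rw [glue_succ (p := r), if_neg h]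
      refine (ih t).congr_of_eventuallyEq ?_ (if_neg h)
      have : Iio (y (m+1)) ∈ nhds t := Iio_mem_nhds (not_le.1 h)
      exact Filter.eventually_of_mem (nhdsWithin_le_nhds this)
        (fun x hx => if_neg (not_le.2 hx))

lemma glue_intervalIntegrable (hq : ∀ i, Continuous (q i)) (c e : ℝ) :
    ∀ m, IntervalIntegrable (glue y q m) volume c e := by
  intro m
  induction m with
  | zero => exact (hq 0).intervalIntegrable _ _
  | succ m ih =>
    have heq : glue y q (m+1) = fun x => glue y q m x +
        (Ici (y (m+1))).indicator (fun x => q (m+1) x - glue y q m x) x := by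
      funext x
      by_cases h : y (m+1) ≤ x
      · rw [glue_succ, if_pos h, indicator_of_mem (mem_Ici.2 h)]; ring
      · rw [glue_succ, if_neg h, indicator_of_notMem (fun hx => h (mem_Ici.1 hx))]; ring
    rw [heq]
    refine ih.add ?_
    rw [intervalIntegrable_iff] at *
    exact (((hq (m+1)).intervalIntegrable c e).def'.sub ih).indicator measurableSet_Ici


noncomputable def kc (y : ℕ → ℝ) : ℕ → ℝ
  | 0 => 1
  | (i+1) => if Even i then -((y (i+1+1) - y (i+1)) / (y (i+1) - y i)) * kc y i else kc y i

lemma kc_zero (y : ℕ → ℝ) : kc y 0 = 1 := rfl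

lemma kc_succ (y : ℕ → ℝ) (i : ℕ) : kc y (i+1) =
    if Even i then -((y (i+1+1) - y (i+1)) / (y (i+1) - y i)) * kc y i else kc y i := rfl

lemma hasDerivAt_cosA (k a dd x : ℝ) :
    HasDerivAt (fun x => k * Real.cos (π * (x - a) / (2 * dd)))
      (k * -(π / (2 * dd)) * Real.sin (π * (x - a) / (2 * dd))) x := by
  have h : ∀ x : ℝ, π * (x - a) / (2 * dd) = (π / (2 * dd)) * x - (π / (2 * dd)) * a := by
    intro x; ring
  simp only [h]
  have h1 : HasDerivAt (fun x : ℝ => (π / (2 * dd)) * x - (π / (2 * dd)) * a)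
      (π / (2 * dd)) x := by
    simpa using ((hasDerivAt_id x).const_mul (π / (2 * dd))).sub_const ((π / (2 * dd)) * a)
  have h2 := (h1.cos).const_mul k
  refine h2.congr_deriv ?_
  ring

lemma hasDerivAt_cosB (k b dd x : ℝ) :
    HasDerivAt (fun x => k * Real.cos (π * (b - x) / (2 * dd)))
      (k * (π / (2 * dd)) * Real.sin (π * (b - x) / (2 * dd))) x := by
  have h : ∀ x : ℝ, π * (b - x) / (2 * dd) = (π / (2 * dd)) * b - (π / (2 * dd)) * x := by
    intro x; ring
  simp only [h]
  have h1 : HasDerivAt (fun x : ℝ => (π / (2 * dd)) * b - (π / (2 * dd)) * x)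
      (-(π / (2 * dd))) x := by
    simpa using ((hasDerivAt_id x).const_mul (π / (2 * dd))).const_sub ((π / (2 * dd)) * b)
  have h2 := (h1.cos).const_mul k
  refine h2.congr_deriv ?_
  ring

lemma hasDerivAt_sinA (k a dd x : ℝ) :
    HasDerivAt (fun x => k * -(π / (2 * dd)) * Real.sin (π * (x - a) / (2 * dd)))
      (-(π^2 / (4 * dd^2)) * (k * Real.cos (π * (x - a) / (2 * dd)))) x := by
  have h : ∀ x : ℝ, π * (x - a) / (2 * dd) = (π / (2 * dd)) * x - (π / (2 * dd)) * a := by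
    intro x; ring
  simp only [h]
  have h1 : HasDerivAt (fun x : ℝ => (π / (2 * dd)) * x - (π / (2 * dd)) * a)
      (π / (2 * dd)) x := by
    simpa using ((hasDerivAt_id x).const_mul (π / (2 * dd))).sub_const ((π / (2 * dd)) * a)
  have h2 := (h1.sin).const_mul (k * -(π / (2 * dd)))
  refine h2.congr_deriv ?_
  ring

lemma hasDerivAt_sinB (k b dd x : ℝ) :
    HasDerivAt (fun x => k * (π / (2 * dd)) * Real.sin (π * (b - x) / (2 * dd)))
      (-(π^2 / (4 * dd^2)) * (k * Real.cos (π * (b - x) / (2 * dd)))) x := by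
  have h : ∀ x : ℝ, π * (b - x) / (2 * dd) = (π / (2 * dd)) * b - (π / (2 * dd)) * x := by
    intro x; ring
  simp only [h]
  have h1 : HasDerivAt (fun x : ℝ => (π / (2 * dd)) * b - (π / (2 * dd)) * x)
      (-(π / (2 * dd))) x := by
    simpa using ((hasDerivAt_id x).const_mul (π / (2 * dd))).const_sub ((π / (2 * dd)) * b)
  have h2 := (h1.sin).const_mul (k * (π / (2 * dd)))
  refine h2.congr_deriv ?_
  ring

lemma pidiv (dd : ℝ) (h : dd ≠ 0) : π * dd / (2 * dd) = π / 2 := by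
  rw [mul_comm 2 dd, ← div_div, mul_div_cancel_right₀ _ h]

end PW17



/-- optimality of the piecewise disfocality criterion: if a equals
π²/(4(y_{i+1}-y_i)²) on each subinterval (y_i, y_{i+1}) of a partition
0 = y₀ < … < y_{2n+2} = L, then the Neumann problem u'' + au = 0, u'(0) = u'(L) = 0
has a nontrivial solution, given piecewise by cosines with appropriate nonzero
constants k_i. -/
theorem piecewise_constant_has_nontrivial_solution (L : ℝ) (hL : 0 < L) (n : ℕ)
    (y : ℕ → ℝ) (hy0 : y 0 = 0) (hyL : y (2 * n + 2) = L)
    (hmono : StrictMonoOn y (Iic (2 * n + 2)))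
    (a : ℝ → ℝ)
    (ha : ∀ i ≤ 2 * n + 1, ∀ x ∈ Ioo (y i) (y (i + 1)),
        a x = π ^ 2 / (4 * (y (i + 1) - y i) ^ 2)) :
    ∃ (u v : ℝ → ℝ) (k : ℕ → ℝ),
      (∀ i ≤ 2 * n + 1, k i ≠ 0) ∧
      (∀ x ∈ Icc (0:ℝ) L, u x = u 0 + ∫ t in (0:ℝ)..x, v t) ∧
      (∀ x ∈ Icc (0:ℝ) L, v x = - ∫ t in (0:ℝ)..x, a t * u t) ∧
      v L = 0 ∧
      (∃ x ∈ Icc (0:ℝ) L, u x ≠ 0) ∧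
      (∀ i ≤ 2 * n + 1, ∀ x ∈ Icc (y i) (y (i + 1)),
        u x = if Even i then
            k i * Real.cos (π * (x - y i) / (2 * (y (i + 1) - y i)))
          else
            k i * Real.cos (π * (y (i + 1) - x) / (2 * (y (i + 1) - y i)))) := by
  classical
  have hd : ∀ i, i ≤ 2*n+1 → y i < y (i+1) := fun i hi =>
    hmono (mem_Iic.2 (by omega)) (mem_Iic.2 (by omega)) (by omega)
  have hdne : ∀ i, i ≤ 2*n+1 → y (i+1) - y i ≠ 0 := fun i hi => ne_of_gt (sub_pos.2 (hd i hi))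
  have hmonle : ∀ i j, i ≤ j → j ≤ 2*n+2 → y i ≤ y j := fun i j hij hj =>
    hmono.monotoneOn (mem_Iic.2 (by omega)) (mem_Iic.2 hj) hij
  set k : ℕ → ℝ := PW17.kc y with hk
  have hknz : ∀ i, i ≤ 2*n+1 → k i ≠ 0 := by
    intro i
    induction i with
    | zero => intro _; exact one_ne_zero
    | succ i ih =>
      intro hi
      have hki := ih (by omega)
      rw [hk, PW17.kc_succ]
      by_cases he : Even i
      · rw [if_pos he]
        exact mul_ne_zero (neg_ne_zero.2 (div_ne_zero (hdne (i+1) hi) (hdne i (by omega)))) hki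
      · rw [if_neg he]; exact hki
  set p : ℕ → ℝ → ℝ := fun i => if Even i then
      (fun x => k i * Real.cos (π * (x - y i) / (2 * (y (i+1) - y i))))
    else (fun x => k i * Real.cos (π * (y (i+1) - x) / (2 * (y (i+1) - y i)))) with hp
  set q : ℕ → ℝ → ℝ := fun i => if Even i then
      (fun x => k i * -(π / (2 * (y (i+1) - y i))) *
        Real.sin (π * (x - y i) / (2 * (y (i+1) - y i))))
    else (fun x => k i * (π / (2 * (y (i+1) - y i))) *
        Real.sin (π * (y (i+1) - x) / (2 * (y (i+1) - y i)))) with hq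
  set r : ℕ → ℝ → ℝ := fun i x => -(π^2 / (4 * (y (i+1) - y i)^2)) * p i x with hr
  have hpq : ∀ i x, HasDerivAt (p i) (q i x) x := by
    intro i x
    by_cases he : Even i
    · simp only [hp, hq, if_pos he]; exact PW17.hasDerivAt_cosA _ _ _ x
    · simp only [hp, hq, if_neg he]; exact PW17.hasDerivAt_cosB _ _ _ x
  have hqr : ∀ i x, HasDerivAt (q i) (r i x) x := by
    intro i x
    by_cases he : Even i
    · simp only [hp, hq, hr, if_pos he]; exact PW17.hasDerivAt_sinA _ _ _ x
    · simp only [hp, hq, hr, if_neg he]; exact PW17.hasDerivAt_sinB _ _ _ x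
  have hpc : ∀ i, Continuous (p i) := by
    intro i
    by_cases he : Even i
    · simp only [hp, if_pos he]
      exact continuous_const.mul (Real.continuous_cos.comp
        (((continuous_const.mul (continuous_id.sub continuous_const)).div_const _)))
    · simp only [hp, if_neg he]
      exact continuous_const.mul (Real.continuous_cos.comp
        (((continuous_const.mul (continuous_const.sub continuous_id)).div_const _)))
  have hqc : ∀ i, Continuous (q i) := by
    intro i
    by_cases he : Even i
    · simp only [hq, if_pos he]
      exact continuous_const.mul (Real.continuous_sin.comp
        (((continuous_const.mul (continuous_id.sub continuous_const)).div_const _)))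
    · simp only [hq, if_neg he]
      exact continuous_const.mul (Real.continuous_sin.comp
        (((continuous_const.mul (continuous_const.sub continuous_id)).div_const _)))
  have hrc : ∀ i, Continuous (r i) := fun i => continuous_const.mul (hpc i)
  have hknext : ∀ i, Even i → k (i+1) = -((y (i+1+1) - y (i+1)) / (y (i+1) - y i)) * k i := by
    intro i he; rw [hk, PW17.kc_succ, if_pos he]
  have hkodd : ∀ i, ¬ Even i → k (i+1) = k i := by
    intro i he; rw [hk, PW17.kc_succ, if_neg he]
  have hpm : ∀ i, i < 2*n+1 → p i (y (i+1)) = p (i+1) (y (i+1)) := by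
    intro i hi
    have h0 := hdne i (by omega)
    have h1 := hdne (i+1) (by omega)
    by_cases he : Even i
    · have he' : ¬ Even (i+1) := by simp [Nat.even_add_one, he]
      simp only [hp, if_pos he, if_neg he']
      rw [PW17.pidiv _ h0, PW17.pidiv _ h1, Real.cos_pi_div_two, mul_zero, mul_zero]
    · have he' : Even (i+1) := by simp [Nat.even_add_one, he]
      simp only [hp, if_neg he, if_pos he']
      rw [sub_self, hkodd i he]; norm_num
  have hqm : ∀ i, i < 2*n+1 → q i (y (i+1)) = q (i+1) (y (i+1)) := by
    intro i hi
    have h0 := hdne i (by omega)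
    have h1 := hdne (i+1) (by omega)
    by_cases he : Even i
    · have he' : ¬ Even (i+1) := by simp [Nat.even_add_one, he]
      simp only [hq, if_pos he, if_neg he']
      rw [PW17.pidiv _ h0, PW17.pidiv _ h1, Real.sin_pi_div_two, mul_one, mul_one,
        hknext i he]
      field_simp
    · have he' : Even (i+1) := by simp [Nat.even_add_one, he]
      simp only [hq, if_neg he, if_pos he']
      rw [sub_self]; norm_num
  have hle : ∀ i, i < 2*n+1 → y i ≤ y (i+1) := fun i hi => le_of_lt (hd i (by omega))
  have heval : ∀ (s : ℕ → ℝ → ℝ), (∀ i, i < 2*n+1 → s i (y (i+1)) = s (i+1) (y (i+1))) →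
      ∀ i, i ≤ 2*n+1 → ∀ x ∈ Icc (y i) (y (i+1)), PW17.glue y s (2*n+1) x = s i x := by
    intro s hs i hi x hx
    rcases lt_or_eq_of_le hx.2 with hlt | heq
    · exact PW17.glue_eval (2*n+1) i hi hx.1
        (fun l hl hlm => lt_of_lt_of_le hlt (hmonle (i+1) l hl (by omega)))
    · by_cases h21 : i = 2*n+1
      · subst h21; exact PW17.glue_of_ge hx.1
      · have h1 : PW17.glue y s (2*n+1) x = s (i+1) x :=
          PW17.glue_eval (2*n+1) (i+1) (by omega) (le_of_eq heq.symm)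
            (fun l hl hlm => by
              rw [heq]
              exact hmono (mem_Iic.2 (by omega)) (mem_Iic.2 (by omega)) hl)
        rw [h1, heq, ← hs i (by omega), ← heq]
  have hucont : Continuous (PW17.glue y p (2*n+1)) :=
    PW17.glue_continuous hpc (2*n+1) hle hpm
  have hvcont : Continuous (PW17.glue y q (2*n+1)) :=
    PW17.glue_continuous hqc (2*n+1) hle hqm
  have huder : ∀ t : ℝ, HasDerivAt (PW17.glue y p (2*n+1)) (PW17.glue y q (2*n+1) t) t :=
    PW17.glue_hasDerivAt hpq (2*n+1) hle hpm hqm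
  refine ⟨PW17.glue y p (2*n+1), PW17.glue y q (2*n+1), k, fun i hi => hknz i hi, ?_, ?_, ?_, ?_, ?_⟩
  · -- FTC for u
    intro x hx
    have h1 : ∫ t in (0:ℝ)..x, PW17.glue y q (2*n+1) t =
        PW17.glue y p (2*n+1) x - PW17.glue y p (2*n+1) 0 :=
      intervalIntegral.integral_eq_sub_of_hasDerivAt (fun t _ => huder t)
        (hvcont.intervalIntegrable 0 x)
    rw [h1]
    ring
  · -- FTC for v
    intro x hx
    have hw : ∫ t in (0:ℝ)..x, PW17.glue y r (2*n+1) t =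
        PW17.glue y q (2*n+1) x - PW17.glue y q (2*n+1) 0 :=
      intervalIntegral.integral_eq_sub_of_hasDeriv_right_of_le hx.1
        (hvcont.continuousOn)
        (fun t ht => PW17.glue_hasDerivWithinAt_Ioi hqr (2*n+1) t)
        (PW17.glue_intervalIntegrable hrc 0 x (2*n+1))
    have hv0 : PW17.glue y q (2*n+1) 0 = 0 := by
      have h0m : (0:ℝ) ∈ Icc (y 0) (y 1) :=
        ⟨le_of_eq hy0, hy0 ▸ le_of_lt (hd 0 (by omega))⟩
      rw [heval q hqm 0 (by omega) 0 h0m]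
      have he0 : Even 0 := Even.zero
      simp only [hq, if_pos he0, hy0, sub_zero, mul_zero, zero_div, Real.sin_zero]
    have hae : ∀ᵐ t ∂(volume : Measure ℝ), t ∈ Set.uIoc (0:ℝ) x →
        a t * PW17.glue y p (2*n+1) t = -(PW17.glue y r (2*n+1) t) := by
      have hcnt : (y '' (Iic (2*n+2))).Countable :=
        (Set.to_countable (Iic (2*n+2))).image y
      have hnull := hcnt.measure_zero (volume : Measure ℝ)
      filter_upwards [measure_eq_zero_iff_ae_notMem.1 hnull] with t htS htI
      rw [uIoc_of_le hx.1] at htI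
      have ht0 : 0 < t := htI.1
      have htL : t < L := by
        rcases lt_or_eq_of_le (htI.2.trans hx.2) with h | h
        · exact h
        · exact absurd ⟨2*n+2, mem_Iic.2 le_rfl, by rw [hyL, h]⟩ htS
      obtain ⟨i, hidef⟩ : ∃ i, i = Nat.findGreatest (fun j => y j < t) (2*n+1) := ⟨_, rfl⟩
      have hi : i ≤ 2*n+1 := hidef ▸ Nat.findGreatest_le _
      have hyi : y i < t := by
        have h := Nat.findGreatest_spec (P := fun j => y j < t) (m := 0) (n := 2*n+1)
          (Nat.zero_le _) (show (fun j => y j < t) 0 by simpa [hy0] using ht0)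
        simpa only [← hidef] using h
      have hti : t < y (i+1) := by
        by_cases h21 : i = 2*n+1
        · rw [h21]
          calc t < L := htL
          _ = y (2*n+2) := hyL.symm
        · have hgt : Nat.findGreatest (fun j => y j < t) (2*n+1) < i+1 := by
            rw [← hidef]; omega
          have hnotlt : ¬ y (i+1) < t :=
            Nat.findGreatest_is_greatest hgt (by omega)
          rcases lt_or_eq_of_le (not_lt.1 hnotlt) with h | h
          · exact h
          · exact absurd ⟨i+1, mem_Iic.2 (by omega), h.symm⟩ htS
      have hmem : t ∈ Ioo (y i) (y (i+1)) := ⟨hyi, hti⟩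
      have hat : a t = π ^ 2 / (4 * (y (i + 1) - y i) ^ 2) := ha i hi t hmem
      have hut : PW17.glue y p (2*n+1) t = p i t :=
        heval p hpm i hi t ⟨le_of_lt hyi, le_of_lt hti⟩
      have hwt : PW17.glue y r (2*n+1) t = r i t :=
        PW17.glue_eval (2*n+1) i hi (le_of_lt hyi)
          (fun l hl hlm => lt_of_lt_of_le hti (hmonle (i+1) l hl (by omega)))
      rw [hat, hut, hwt, hr]
      ring
    have hai : ∫ t in (0:ℝ)..x, a t * PW17.glue y p (2*n+1) t =
        ∫ t in (0:ℝ)..x, -(PW17.glue y r (2*n+1) t) :=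
      intervalIntegral.integral_congr_ae hae
    rw [hai, intervalIntegral.integral_neg, hw, hv0]
    ring
  · -- v L = 0
    have hLm : L ∈ Icc (y (2*n+1)) (y (2*n+1+1)) := by
      have : (2*n+1+1) = 2*n+2 := rfl
      rw [this, hyL]
      exact ⟨by rw [← hyL]; exact hmonle (2*n+1) (2*n+2) (by omega) le_rfl, le_rfl⟩
    rw [heval q hqm (2*n+1) le_rfl L hLm]
    have he : ¬ Even (2*n+1) := by simp [Nat.even_add_one, Nat.even_add_one]
    simp only [hq, if_neg he]
    have h22 : (2*n+1+1) = 2*n+2 := rfl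
    rw [h22, hyL, sub_self, mul_zero, zero_div, Real.sin_zero, mul_zero]
  · -- nontrivial
    refine ⟨0, ⟨le_rfl, le_of_lt hL⟩, ?_⟩
    have h0m : (0:ℝ) ∈ Icc (y 0) (y 1) :=
      ⟨le_of_eq hy0, hy0 ▸ le_of_lt (hd 0 (by omega))⟩
    rw [heval p hpm 0 (by omega) 0 h0m]
    have he0 : Even 0 := Even.zero
    simp only [hp, if_pos he0, hy0, sub_zero, sub_self, mul_zero, zero_div,
      Real.cos_zero, mul_one]
    exact hknz 0 (by omega)
  · -- piecewise formula
    intro i hi x hx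
    rw [heval p hpm i hi x hx]
    by_cases he : Even i
    · simp only [hp, if_pos he, he, if_true]
    · simp only [hp, if_neg he, he, if_false]
end

section
/- Let 0 = y₀ < y₁ < … < y_{2n+1} < y_{2n+2} = L with y_{k+1} - y_k < L/(2n) for all k, and suppose y_{i+1} - y_i ≠ y_{j+1} - y_j for some i, j. Then Σ_{i=0}^{2n+1} (nπ/L) cot(nπ(y_{i+1}-y_i)/L) > (2πn(n+1)/L) cot(nπ/(2(n+1))), and consequently there exists a ∈ L¹(0,L) with λₙ ≺ a satisfying the piecewise condition ‖a - λₙ‖_{L¹(y_i,y_{i+1})} < (nπ/L)cot(nπ(y_{i+1}-y_i)/L) for all i, but with ‖a - λₙ‖_{L¹(0,L)} > β₁,ₙ = (2πn(n+1)/L)cot(nπ/(2(n+1))). -/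
open MeasureTheory Real Set intervalIntegral

lemma hasDerivAt_cot' {x : ℝ} (hx : Real.sin x ≠ 0) :
    HasDerivAt Real.cot (-1 / Real.sin x ^ 2) x := by
  have h := (Real.hasDerivAt_cos x).div (Real.hasDerivAt_sin x) hx
  have hfun : Real.cot = fun y => Real.cos y / Real.sin y := funext fun y => Real.cot_eq_cos_div_sin y
  rw [hfun]
  refine h.congr_deriv ?_
  have := Real.sin_sq_add_cos_sq x
  rw [div_eq_div_iff (pow_ne_zero 2 hx) (pow_ne_zero 2 hx)]
  nlinarith [this]

lemma strictConvexOn_cot : StrictConvexOn ℝ (Ioo 0 (π/2)) Real.cot := by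
  have hsin : ∀ x ∈ Ioo (0:ℝ) (π/2), 0 < Real.sin x := fun x hx =>
    Real.sin_pos_of_pos_of_lt_pi hx.1 (hx.2.trans (by linarith [Real.pi_pos]))
  have hcos : ∀ x ∈ Ioo (0:ℝ) (π/2), 0 < Real.cos x := fun x hx =>
    Real.cos_pos_of_mem_Ioo ⟨by linarith [hx.1, Real.pi_pos], hx.2⟩
  apply strictConvexOn_of_deriv2_pos (convex_Ioo _ _)
  · intro x hx
    have : Real.cot = fun y => Real.cos y / Real.sin y := funext fun y => Real.cot_eq_cos_div_sin y
    rw [this]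
    exact ContinuousAt.continuousWithinAt <|
      (Real.continuous_cos.continuousAt).div (Real.continuous_sin.continuousAt) (hsin x hx).ne'
  · intro x hx
    rw [interior_Ioo] at hx
    have hev : deriv Real.cot =ᶠ[nhds x] fun y => -1 / Real.sin y ^ 2 := by
      filter_upwards [isOpen_Ioo.mem_nhds hx] with y hy
      exact (hasDerivAt_cot' (hsin y hy).ne').deriv
    have hd2 : HasDerivAt (fun y => -1 / Real.sin y ^ 2)
        ((0 * Real.sin x ^ 2 - (-1) * (2 * Real.sin x ^ 1 * Real.cos x)) / (Real.sin x ^ 2) ^ 2) x := by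
      exact (hasDerivAt_const x (-1)).div ((Real.hasDerivAt_sin x).pow 2)
        (pow_ne_zero 2 (hsin x hx).ne')
    have : deriv^[2] Real.cot x = deriv (deriv Real.cot) x := by
      simp [Function.iterate_succ, Function.comp]
    rw [this, hev.deriv_eq, hd2.deriv]
    have h1 := hsin x hx
    have h2 := hcos x hx
    have : (0 * Real.sin x ^ 2 - (-1) * (2 * Real.sin x ^ 1 * Real.cos x)) / (Real.sin x ^ 2) ^ 2
        = 2 * Real.sin x * Real.cos x / (Real.sin x ^ 2) ^ 2 := by ring
    rw [this]
    positivity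

lemma cot_pos' {x : ℝ} (hx : x ∈ Ioo 0 (π/2)) : 0 < Real.cot x := by
  rw [Real.cot_eq_cos_div_sin]
  exact div_pos (Real.cos_pos_of_mem_Ioo ⟨by linarith [hx.1, Real.pi_pos], hx.2⟩)
    (Real.sin_pos_of_pos_of_lt_pi hx.1 (hx.2.trans (by linarith [Real.pi_pos])))

lemma aux_sum_ineq (L : ℝ) (hL : 0 < L) (n : ℕ) (hn : 1 ≤ n)
    (y : ℕ → ℝ) (hy0 : y 0 = 0) (hyL : y (2 * n + 2) = L)
    (hmono : StrictMonoOn y (Iic (2 * n + 2)))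
    (hgap : ∀ k ≤ 2 * n + 1, y (k + 1) - y k < L / (2 * n))
    (hne : ∃ i ≤ 2 * n + 1, ∃ j ≤ 2 * n + 1, y (i + 1) - y i ≠ y (j + 1) - y j) :
    (∑ i ∈ Finset.range (2 * n + 2),
        (n : ℝ) * π / L * Real.cot ((n : ℝ) * π * (y (i + 1) - y i) / L)) >
      2 * π * n * (n + 1) / L * Real.cot ((n : ℝ) * π / (2 * ((n : ℝ) + 1))) := by
  have hπ := Real.pi_pos
  have hn' : (1:ℝ) ≤ n := by exact_mod_cast hn
  have hn0 : (n:ℝ) ≠ 0 := by positivity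
  have hL0 : L ≠ 0 := hL.ne'
  have hfac : 0 < (n:ℝ) * π / L := by positivity
  have hgpos : ∀ i ≤ 2 * n + 1, 0 < y (i + 1) - y i := by
    intro i hi
    have := hmono (mem_Iic.2 (by omega : i ≤ 2 * n + 2)) (mem_Iic.2 (by omega : i + 1 ≤ 2 * n + 2))
      (Nat.lt_succ_self i)
    linarith
  have hsumg : ∑ i ∈ Finset.range (2 * n + 2), (y (i + 1) - y i) = L := by
    rw [Finset.sum_range_sub y (2 * n + 2), hy0, hyL, sub_zero]
  set p : ℕ → ℝ := fun i => (n : ℝ) * π * (y (i + 1) - y i) / L with hp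
  have hpmem : ∀ i ∈ Finset.range (2 * n + 2), p i ∈ Ioo 0 (π/2) := by
    intro i hi
    rw [Finset.mem_range] at hi
    have hi' : i ≤ 2 * n + 1 := by omega
    refine ⟨by have := hgpos i hi'; positivity, ?_⟩
    calc (n:ℝ) * π * (y (i + 1) - y i) / L = (n:ℝ) * π / L * (y (i + 1) - y i) := by ring
      _ < (n:ℝ) * π / L * (L / (2 * n)) := mul_lt_mul_of_pos_left (hgap i hi') hfac
      _ = π / 2 := by field_simp
  have hN : ((2 * n + 2 : ℕ) : ℝ) = 2 * ((n:ℝ) + 1) := by push_cast; ring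
  have hN0 : (0:ℝ) < ((2 * n + 2 : ℕ) : ℝ) := by positivity
  have hw : ∑ _i ∈ Finset.range (2 * n + 2), ((2 * n + 2 : ℕ) : ℝ)⁻¹ = 1 := by
    rw [Finset.sum_const, Finset.card_range, nsmul_eq_mul, mul_inv_cancel₀ hN0.ne']
  have jensen := strictConvexOn_cot.map_sum_lt
    (t := Finset.range (2 * n + 2)) (w := fun _ => ((2 * n + 2 : ℕ) : ℝ)⁻¹) (p := p)
    (fun i _ => by positivity) hw hpmem ?hne
  case hne =>
    obtain ⟨i, hi, j, hj, hij⟩ := hne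
    refine ⟨i, Finset.mem_range.2 (by omega), j, Finset.mem_range.2 (by omega), ?_⟩
    simp only [hp]
    intro h
    apply hij
    rw [div_eq_div_iff hL0 hL0] at h
    exact mul_left_cancel₀ (by positivity : (n:ℝ) * π ≠ 0) (mul_right_cancel₀ hL0 h)
  -- rewrite argument of cot on LHS of jensen
  have harg : ∑ i ∈ Finset.range (2 * n + 2), ((2 * n + 2 : ℕ) : ℝ)⁻¹ • p i
      = (n : ℝ) * π / (2 * ((n:ℝ) + 1)) := by
    simp only [smul_eq_mul, hp]
    rw [← Finset.mul_sum, ← Finset.sum_div, ← Finset.mul_sum, hsumg]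
    field_simp
    push_cast
    ring
  rw [harg] at jensen
  have hsum' : ∑ i ∈ Finset.range (2 * n + 2), ((2 * n + 2 : ℕ) : ℝ)⁻¹ • Real.cot (p i)
      = ((2 * n + 2 : ℕ) : ℝ)⁻¹ * ∑ i ∈ Finset.range (2 * n + 2), Real.cot (p i) := by
    rw [Finset.mul_sum]; simp [smul_eq_mul]
  rw [hsum'] at jensen
  have hC : ((2 * n + 2 : ℕ) : ℝ) * Real.cot ((n : ℝ) * π / (2 * ((n:ℝ) + 1)))
      < ∑ i ∈ Finset.range (2 * n + 2), Real.cot (p i) := by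
    have h2 := mul_lt_mul_of_pos_left jensen hN0
    rwa [← mul_assoc, mul_inv_cancel₀ hN0.ne', one_mul] at h2
  have hrw : ∑ i ∈ Finset.range (2 * n + 2),
      (n : ℝ) * π / L * Real.cot ((n : ℝ) * π * (y (i + 1) - y i) / L)
      = (n : ℝ) * π / L * ∑ i ∈ Finset.range (2 * n + 2), Real.cot (p i) := by
    rw [Finset.mul_sum]
  rw [hrw]
  calc 2 * π * n * (n + 1) / L * Real.cot ((n : ℝ) * π / (2 * ((n:ℝ) + 1)))
      = (n : ℝ) * π / L * (((2 * n + 2 : ℕ) : ℝ) * Real.cot ((n : ℝ) * π / (2 * ((n:ℝ) + 1)))) := by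
        rw [hN]; ring
    _ < (n : ℝ) * π / L * ∑ i ∈ Finset.range (2 * n + 2), Real.cot (p i) :=
        mul_lt_mul_of_pos_left hC hfac

lemma aux_construct (L : ℝ) (hL : 0 < L) (n : ℕ) (hn : 1 ≤ n)
    (y : ℕ → ℝ) (hy0 : y 0 = 0) (hyL : y (2 * n + 2) = L)
    (hmono : StrictMonoOn y (Iic (2 * n + 2)))
    (b : ℕ → ℝ) (hb : ∀ i ≤ 2 * n + 1, 0 < b i)
    (β : ℝ) (hβ : 0 < β)
    (hS : β < ∑ i ∈ Finset.range (2 * n + 2), b i) :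
    ∃ a : ℝ → ℝ,
      IntegrableOn a (Ioo 0 L) ∧
      (∀ᵐ x ∂(volume.restrict (Ioo 0 L)), (n : ℝ) ^ 2 * π ^ 2 / L ^ 2 ≤ a x) ∧
      0 < volume (Ioo 0 L ∩ {x | (n : ℝ) ^ 2 * π ^ 2 / L ^ 2 < a x}) ∧
      (∀ i ≤ 2 * n + 1,
        (∫ x in y i..y (i + 1), |a x - (n : ℝ) ^ 2 * π ^ 2 / L ^ 2|) < b i) ∧
      (∫ x in (0:ℝ)..L, |a x - (n : ℝ) ^ 2 * π ^ 2 / L ^ 2|) > β := by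
  have hπ := Real.pi_pos
  set lam : ℝ := (n : ℝ) ^ 2 * π ^ 2 / L ^ 2 with hlam
  set N := 2 * n + 2 with hN
  set S := ∑ i ∈ Finset.range N, b i with hSdef
  have hSpos : 0 < S := lt_trans hβ hS
  set θ : ℝ := (β + S) / (2 * S) with hθ
  have hθpos : 0 < θ := by positivity
  have hθlt : θ < 1 := by rw [div_lt_one (by positivity)]; linarith
  have hθS : β < θ * S := by
    rw [hθ, div_mul_eq_mul_div, mul_comm (2:ℝ) S, ← div_div,
      mul_div_assoc, div_self hSpos.ne', mul_one]
    linarith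
  have hle : ∀ j k : ℕ, j ≤ k → k ≤ N → y j ≤ y k := fun j k hjk hk =>
    hmono.monotoneOn (mem_Iic.2 (hjk.trans hk)) (mem_Iic.2 hk) hjk
  have hlt : ∀ j k : ℕ, j < k → k ≤ N → y j < y k := fun j k hjk hk =>
    hmono (mem_Iic.2 (hjk.le.trans hk)) (mem_Iic.2 hk) hjk
  have hgpos : ∀ i, i < N → 0 < y (i + 1) - y i := fun i hi =>
    sub_pos.2 (hlt i (i + 1) (Nat.lt_succ_self i) hi)
  have hy_nonneg : ∀ k, k ≤ N → 0 ≤ y k := fun k hk => hy0 ▸ hle 0 k (Nat.zero_le k) hk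
  have hy_leL : ∀ k, k ≤ N → y k ≤ L := fun k hk => hyL ▸ hle k N hk le_rfl
  set c : ℕ → ℝ := fun j => θ * b j / (y (j + 1) - y j) with hc
  have hcpos : ∀ j, j < N → 0 < c j := fun j hj =>
    div_pos (mul_pos hθpos (hb j (by omega))) (hgpos j hj)
  have hcb : ∀ j, j < N → (y (j + 1) - y j) * c j = θ * b j := by
    intro j hj
    rw [hc]
    field_simp
    rw [mul_comm, mul_div_assoc, div_self (hgpos j hj).ne', mul_one]
  set F : ℝ → ℝ := fun x =>
    ∑ j ∈ Finset.range N, (Ico (y j) (y (j + 1))).indicator (fun _ => c j) x with hF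
  have hFnn : ∀ x, 0 ≤ F x := fun x =>
    Finset.sum_nonneg fun j hj =>
      Set.indicator_nonneg (fun _ _ => (hcpos j (Finset.mem_range.1 hj)).le) x
  have habs : ∀ x, |lam + F x - lam| = F x := fun x => by
    rw [add_sub_cancel_left, abs_of_nonneg (hFnn x)]
  -- generic integral computation over an Ioc
  have key : ∀ u v : ℝ, (∫ x in Ioc u v, F x)
      = ∑ j ∈ Finset.range N,
          (volume (Ico (y j) (y (j + 1)) ∩ Ioc u v)).toReal * c j := by
    intro u v
    have hfin : volume (Ioc u v) < ⊤ := measure_Ioc_lt_top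
    rw [hF, MeasureTheory.integral_finset_sum _ (fun j hj =>
      (integrableOn_const (C := c j) hfin.ne).indicator measurableSet_Ico)]
    refine Finset.sum_congr rfl fun j hj => ?_
    rw [MeasureTheory.integral_indicator_const _ measurableSet_Ico,
      measureReal_def, Measure.restrict_apply measurableSet_Ico, smul_eq_mul]
  refine ⟨fun x => lam + F x, ?_, ?_, ?_, ?_, ?_⟩
  · -- integrable
    have hfin : volume (Ioo (0:ℝ) L) < ⊤ := measure_Ioo_lt_top
    apply Integrable.add (integrableOn_const hfin.ne)
    apply integrable_finset_sum
    intro j hj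
    exact (integrableOn_const hfin.ne).indicator measurableSet_Ico
  · exact ae_of_all _ fun x => le_add_of_nonneg_right (hFnn x)
  · -- positive measure
    have hsub : Ioo (y 0) (y 1) ⊆ Ioo 0 L ∩ {x | lam < lam + F x} := by
      intro x hx
      have h1 : y 1 ≤ L := hy_leL 1 (by omega)
      refine ⟨⟨hy0 ▸ hx.1, lt_of_lt_of_le hx.2 h1⟩, ?_⟩
      have hmem0 : x ∈ Ico (y 0) (y 1) := ⟨hx.1.le, hx.2⟩
      have hge : c 0 ≤ F x := by
        have h := Finset.single_le_sum (f := fun j =>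
          (Ico (y j) (y (j + 1))).indicator (fun _ => c j) x)
          (fun j hj => Set.indicator_nonneg (fun _ _ => (hcpos j (Finset.mem_range.1 hj)).le) x)
          (Finset.mem_range.2 (show 0 < N by omega))
        calc c 0 = (Ico (y 0) (y 1)).indicator (fun _ => c 0) x :=
              (Set.indicator_of_mem hmem0 (fun _ => c 0)).symm
          _ ≤ F x := h
      have : 0 < F x := lt_of_lt_of_le (hcpos 0 (by omega)) hge
      simpa using this
    calc (0:ENNReal) < volume (Ioo (y 0) (y 1)) := by
          rw [Real.volume_Ioo]
          exact ENNReal.ofReal_pos.2 (sub_pos.2 (hlt 0 1 one_pos (by omega)))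
      _ ≤ _ := measure_mono hsub
  · -- piecewise integrals
    intro i hi
    have hiN : i < N := by omega
    have hyi : y i ≤ y (i + 1) := (hlt i (i + 1) (Nat.lt_succ_self i) hiN).le
    rw [intervalIntegral.integral_of_le hyi]
    simp only [habs]
    rw [key]
    rw [Finset.sum_eq_single i ?h1 ?h2]
    · have hvol : volume (Ico (y i) (y (i + 1)) ∩ Ioc (y i) (y (i + 1)))
          = ENNReal.ofReal (y (i + 1) - y i) := by
        apply le_antisymm
        · calc _ ≤ volume (Icc (y i) (y (i + 1))) :=
                measure_mono (fun x hx => ⟨hx.1.1, hx.2.2⟩)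
            _ = _ := Real.volume_Icc
        · calc ENNReal.ofReal (y (i + 1) - y i) = volume (Ioo (y i) (y (i + 1))) :=
                (Real.volume_Ioo).symm
            _ ≤ _ := measure_mono (by intro x hx; exact ⟨⟨hx.1.le, hx.2⟩, hx.1, hx.2.le⟩)
      rw [hvol, ENNReal.toReal_ofReal (hgpos i hiN).le, hcb i hiN]
      nlinarith [hb i hi, hθlt, hθpos]
    case h1 =>
      intro j hj hji
      have hjN : j < N := Finset.mem_range.1 hj
      have hzero : volume (Ico (y j) (y (j + 1)) ∩ Ioc (y i) (y (i + 1))) = 0 := by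
        rcases lt_or_gt_of_ne hji with h | h
        · have hle' : y (j + 1) ≤ y i := hle (j + 1) i h (by omega)
          have hempty : Ico (y j) (y (j + 1)) ∩ Ioc (y i) (y (i + 1)) = ∅ := by
            ext x
            simp only [mem_inter_iff, mem_Ico, mem_Ioc, mem_empty_iff_false, iff_false]
            rintro ⟨⟨_, h2⟩, h3, _⟩
            linarith
          simp [hempty]
        · have hle' : y (i + 1) ≤ y j := hle (i + 1) j h (by omega)
          have hsub : Ico (y j) (y (j + 1)) ∩ Ioc (y i) (y (i + 1)) ⊆ {y (i + 1)} := by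
            intro x hx
            have : x = y (i + 1) := le_antisymm hx.2.2 (hle'.trans hx.1.1)
            simp [this]
          exact le_antisymm ((measure_mono hsub).trans (by simp)) zero_le
      rw [hzero]
      simp
    case h2 => intro h; exact absurd (Finset.mem_range.2 hiN) h
  · -- total integral
    rw [intervalIntegral.integral_of_le hL.le]
    simp only [habs]
    rw [key]
    have hterm : ∀ j ∈ Finset.range N,
        (volume (Ico (y j) (y (j + 1)) ∩ Ioc 0 L)).toReal * c j = θ * b j := by
      intro j hj
      have hjN : j < N := Finset.mem_range.1 hj
      have hvol : volume (Ico (y j) (y (j + 1)) ∩ Ioc 0 L)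
          = ENNReal.ofReal (y (j + 1) - y j) := by
        apply le_antisymm
        · calc _ ≤ volume (Ico (y j) (y (j + 1))) := measure_mono inter_subset_left
            _ = _ := Real.volume_Ico
        · calc ENNReal.ofReal (y (j + 1) - y j) = volume (Ioo (y j) (y (j + 1))) :=
                (Real.volume_Ioo).symm
            _ ≤ _ := by
              apply measure_mono
              intro x hx
              have h0 : 0 ≤ y j := hy_nonneg j (by omega)
              have h1 : y (j + 1) ≤ L := hy_leL (j + 1) (by omega)
              exact ⟨⟨hx.1.le, hx.2⟩, lt_of_le_of_lt h0 hx.1, hx.2.le.trans h1⟩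
      rw [hvol, ENNReal.toReal_ofReal (hgpos j hjN).le, hcb j hjN]
    rw [Finset.sum_congr rfl hterm, ← Finset.mul_sum, ← hSdef]
    exact hθS


/-- if the gaps of the partition are all < L/(2n) and not all equal,
then Σ (nπ/L)cot(nπ(y_{i+1}-y_i)/L) > β₁,ₙ = (2πn(n+1)/L)cot(nπ/(2(n+1))), and
consequently there exists a ∈ L¹(0,L) with λₙ ≺ a satisfying the piecewise L¹
condition on every subinterval but with ‖a - λₙ‖_{L¹(0,L)} > β₁,ₙ. -/
theorem piecewise_strictly_more_general (L : ℝ) (hL : 0 < L) (n : ℕ) (hn : 1 ≤ n)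
    (y : ℕ → ℝ) (hy0 : y 0 = 0) (hyL : y (2 * n + 2) = L)
    (hmono : StrictMonoOn y (Iic (2 * n + 2)))
    (hgap : ∀ k ≤ 2 * n + 1, y (k + 1) - y k < L / (2 * n))
    (hne : ∃ i ≤ 2 * n + 1, ∃ j ≤ 2 * n + 1, y (i + 1) - y i ≠ y (j + 1) - y j) :
    (∑ i ∈ Finset.range (2 * n + 2),
        (n : ℝ) * π / L * Real.cot ((n : ℝ) * π * (y (i + 1) - y i) / L)) >
      2 * π * n * (n + 1) / L * Real.cot ((n : ℝ) * π / (2 * ((n : ℝ) + 1))) ∧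
    ∃ a : ℝ → ℝ,
      IntegrableOn a (Ioo 0 L) ∧
      (∀ᵐ x ∂(volume.restrict (Ioo 0 L)), (n : ℝ) ^ 2 * π ^ 2 / L ^ 2 ≤ a x) ∧
      0 < volume (Ioo 0 L ∩ {x | (n : ℝ) ^ 2 * π ^ 2 / L ^ 2 < a x}) ∧
      (∀ i ≤ 2 * n + 1,
        (∫ x in y i..y (i + 1), |a x - (n : ℝ) ^ 2 * π ^ 2 / L ^ 2|) <
          (n : ℝ) * π / L * Real.cot ((n : ℝ) * π * (y (i + 1) - y i) / L)) ∧
      (∫ x in (0:ℝ)..L, |a x - (n : ℝ) ^ 2 * π ^ 2 / L ^ 2|) >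
        2 * π * n * (n + 1) / L * Real.cot ((n : ℝ) * π / (2 * ((n : ℝ) + 1))) := by
  have hπ := Real.pi_pos
  have hn' : (1:ℝ) ≤ n := by exact_mod_cast hn
  have hsum := aux_sum_ineq L hL n hn y hy0 hyL hmono hgap hne
  refine ⟨hsum, ?_⟩
  have hmem : (n : ℝ) * π / (2 * ((n:ℝ) + 1)) ∈ Ioo 0 (π/2) := by
    constructor
    · positivity
    · rw [div_lt_div_iff₀ (by positivity) (by norm_num)]
      nlinarith
  have hβ : 0 < 2 * π * n * (n + 1) / L * Real.cot ((n : ℝ) * π / (2 * ((n:ℝ) + 1))) := by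
    have := cot_pos' hmem
    have h2 : (0:ℝ) < 2 * π * n * (n + 1) / L := by positivity
    positivity
  have hb : ∀ i ≤ 2 * n + 1,
      0 < (n : ℝ) * π / L * Real.cot ((n : ℝ) * π * (y (i + 1) - y i) / L) := by
    intro i hi
    have hgpos : 0 < y (i + 1) - y i := by
      have := hmono (mem_Iic.2 (by omega : i ≤ 2 * n + 2))
        (mem_Iic.2 (by omega : i + 1 ≤ 2 * n + 2)) (Nat.lt_succ_self i)
      linarith
    have harg : (n : ℝ) * π * (y (i + 1) - y i) / L ∈ Ioo 0 (π/2) := by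
      refine ⟨by positivity, ?_⟩
      have hfac : 0 < (n:ℝ) * π / L := by positivity
      calc (n:ℝ) * π * (y (i + 1) - y i) / L = (n:ℝ) * π / L * (y (i + 1) - y i) := by ring
        _ < (n:ℝ) * π / L * (L / (2 * n)) := mul_lt_mul_of_pos_left (hgap i hi) hfac
        _ = π / 2 := by field_simp
    have := cot_pos' harg
    have hfac : 0 < (n:ℝ) * π / L := by positivity
    positivity
  exact aux_construct L hL n hn y hy0 hyL hmono _ hb _ hβ hsum
end
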